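/- arXiv:1906.02029 — 7 statements merged into one kernel-verified Lean document; each statement's English description precedes it below -/
import Mathlib

section
/- Let n be a positive integer, D ≥ 1 a real number, and let P = {p prime : p ≤ D and p | n}. Then ∑_{d | n, d ≤ D} 1/d ≥ (1/2) · ∑_{d ≤ D, every prime factor of d lies in P} 1/d. -/
lemma stmt5_decomp (n : ℕ) (hn : 0 < n) :
    ∀ d : ℕ, 0 < d → (∀ p : ℕ, p.Prime → p ∣ d → p ∣ n) →
    ∃ e k : ℕ, e ∣ n ∧ e ∣ d ∧ k ^ 2 ∣ d ∧ 0 < k ∧ d = e * k ^ 2 := by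
  intro d
  induction d using Nat.strong_induction_on with
  | _ d IH =>
    intro hd hsm
    rcases eq_or_lt_of_le (show 1 ≤ d from hd) with h1 | h1
    · exact ⟨1, 1, one_dvd _, one_dvd _, by simp [← h1], one_pos, by simp [← h1]⟩
    set p := d.minFac with hp
    have hpp : p.Prime := Nat.minFac_prime (by omega)
    have hpd : p ∣ d := Nat.minFac_dvd d
    set v := d.factorization p with hv
    have hv1 : 0 < v := hpp.factorization_pos_of_dvd (by omega) hpd
    set d' := d / p ^ v with hd'
    have hdd : p ^ v * d' = d := Nat.ordProj_mul_ordCompl_eq_self d p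
    have hd'pos : 0 < d' := Nat.ordCompl_pos p (by omega)
    have hpd' : ¬ p ∣ d' := Nat.not_dvd_ordCompl hpp (by omega)
    have hd'dvd : d' ∣ d := Nat.ordCompl_dvd d p
    have hd'lt : d' < d := by
      have : 2 ≤ p ^ v := by
        calc 2 ≤ p := hpp.two_le
        _ = p ^ 1 := (pow_one p).symm
        _ ≤ p ^ v := Nat.pow_le_pow_right hpp.pos hv1
      nlinarith
    obtain ⟨e', k', he'n, he'd, hk'd, hk'pos, hek⟩ :=
      IH d' hd'lt hd'pos (fun q hq hqd => hsm q hq (hqd.trans hd'dvd))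
    have hpe' : ¬ p ∣ e' := fun h => hpd' (h.trans he'd)
    have hpk' : ¬ p ∣ k' := fun h => hpd' ((h.trans (dvd_pow_self k' two_ne_zero)).trans hk'd)
    have hcop : ∀ m : ℕ, Nat.Coprime (p ^ m) e' :=
      fun m => (Nat.Prime.coprime_iff_not_dvd hpp |>.mpr hpe').pow_left m
    have hpn : p ∣ n := hsm p hpp hpd
    set w := n.factorization p with hw
    have hw1 : 0 < w := hpp.factorization_pos_of_dvd (by omega) hpn
    by_cases hvw : v ≤ w
    · -- e = p^v * e', k = k'
      refine ⟨p ^ v * e', k', ?_, ?_, ?_, hk'pos, ?_⟩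
      · exact (hcop v).mul_dvd_of_dvd_of_dvd
          ((pow_dvd_pow p hvw).trans (Nat.ordProj_dvd n p)) he'n
      · rw [← hdd]; exact mul_dvd_mul_left _ he'd
      · rw [← hdd]; exact dvd_mul_of_dvd_right hk'd _
      · rw [← hdd, hek]; ring
    · -- v > w ≥ 1, so v ≥ 2
      have hv2 : 2 ≤ v := by omega
      refine ⟨p ^ (v % 2) * e', p ^ (v / 2) * k', ?_, ?_, ?_, ?_, ?_⟩
      · refine (hcop (v % 2)).mul_dvd_of_dvd_of_dvd ?_ he'n
        exact (pow_dvd_pow p (by omega : v % 2 ≤ w)).trans (Nat.ordProj_dvd n p)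
      · rw [← hdd]
        exact mul_dvd_mul (pow_dvd_pow p (by omega : v % 2 ≤ v)) he'd
      · rw [← hdd, mul_pow, ← pow_mul]
        exact mul_dvd_mul (pow_dvd_pow p (by omega)) hk'd
      · exact Nat.mul_pos (Nat.pow_pos hpp.pos) hk'pos
      · rw [← hdd, hek, mul_pow, ← pow_mul]
        have : v % 2 + v / 2 * 2 = v := by omega
        rw [show p ^ (v % 2) * e' * (p ^ (v / 2 * 2) * k' ^ 2)
            = (p ^ (v % 2) * p ^ (v / 2 * 2)) * (e' * k' ^ 2) by ring, ← pow_add, this]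


lemma stmt5_sumsq (K : ℕ) : ∑ k ∈ Finset.Icc 1 K, (1 : ℝ) / (k : ℝ) ^ 2 ≤ 2 - 1 / K := by
  induction K with
  | zero => simp
  | succ K IH =>
    rw [Finset.sum_Icc_succ_top (by omega)]
    rcases Nat.eq_zero_or_pos K with h | h
    · subst h; norm_num
    have hK : (1 : ℝ) ≤ K := by exact_mod_cast h
    have key : (1 : ℝ) / ((K : ℝ) + 1) ^ 2 ≤ 1 / K - 1 / (K + 1) := by
      rw [div_sub_div _ _ (by positivity) (by positivity), one_mul, mul_one,
        add_sub_cancel_left]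
      rw [div_le_div_iff₀ (by positivity) (by positivity)]
      nlinarith
    push_cast
    linarith [IH]

open scoped Classical in
theorem stmt5 (n : ℕ) (hn : 0 < n) (D : ℝ) (hD : 1 ≤ D) :
    (1 / 2 : ℝ) *
        ∑ d ∈ (Finset.Icc 1 ⌊D⌋₊).filter
          (fun d : ℕ => ∀ p : ℕ, p.Prime → p ∣ d → ((p : ℝ) ≤ D ∧ p ∣ n)),
          (1 : ℝ) / d ≤
      ∑ d ∈ n.divisors.filter (fun d : ℕ => (d : ℝ) ≤ D), (1 : ℝ) / d := by
  set K := ⌊D⌋₊ with hKdef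
  set S := (Finset.Icc 1 K).filter
      (fun d : ℕ => ∀ p : ℕ, p.Prime → p ∣ d → ((p : ℝ) ≤ D ∧ p ∣ n)) with hS
  set T' := n.divisors.filter (fun d : ℕ => (d : ℝ) ≤ D) with hT'
  have hKD : (K : ℝ) ≤ D := Nat.floor_le (by linarith)
  -- choose decomposition
  have hex : ∀ d : ℕ, ∃ ek : ℕ × ℕ, d ∈ S →
      ek.1 ∣ n ∧ ek.1 ∣ d ∧ ek.2 ^ 2 ∣ d ∧ 0 < ek.2 ∧ d = ek.1 * ek.2 ^ 2 := by
    intro d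
    by_cases hdS : d ∈ S
    · have hmem := Finset.mem_filter.mp hdS
      have hd1 : 1 ≤ d := (Finset.mem_Icc.mp hmem.1).1
      obtain ⟨e, k, h⟩ := stmt5_decomp n hn d hd1
        (fun p hp hpd => (hmem.2 p hp hpd).2)
      exact ⟨(e, k), fun _ => h⟩
    · exact ⟨(1, 1), fun h => absurd h hdS⟩
  choose F hF using hex
  have hFmem : ∀ d ∈ S, F d ∈ T' ×ˢ Finset.Icc 1 K := by
    intro d hd
    obtain ⟨hen, hed, hkd, hkpos, heq⟩ := hF d hd
    have hmem := Finset.mem_filter.mp hd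
    have hd1 : 1 ≤ d := (Finset.mem_Icc.mp hmem.1).1
    have hdK : d ≤ K := (Finset.mem_Icc.mp hmem.1).2
    have hdD : (d : ℝ) ≤ D := le_trans (by exact_mod_cast hdK) hKD
    refine Finset.mem_product.mpr ⟨?_, ?_⟩
    · refine Finset.mem_filter.mpr ⟨Nat.mem_divisors.mpr ⟨hen, by omega⟩, ?_⟩
      have : (F d).1 ≤ d := Nat.le_of_dvd (by omega) hed
      calc ((F d).1 : ℝ) ≤ d := by exact_mod_cast this
        _ ≤ D := hdD
    · refine Finset.mem_Icc.mpr ⟨hkpos, ?_⟩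
      have h1 : (F d).2 ≤ (F d).2 ^ 2 := Nat.le_self_pow two_ne_zero _
      have h2 : (F d).2 ^ 2 ≤ d := Nat.le_of_dvd (by omega) hkd
      omega
  have hFinj : ∀ x ∈ S, ∀ y ∈ S, F x = F y → x = y := by
    intro x hx y hy hxy
    obtain ⟨_, _, _, _, hex⟩ := hF x hx
    obtain ⟨_, _, _, _, hey⟩ := hF y hy
    rw [hex, hey, hxy]
  have himg : ∑ d ∈ S, (1 : ℝ) / d
      = ∑ x ∈ S.image F, (1 : ℝ) / (x.1 * x.2 ^ 2 : ℕ) := by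
    rw [Finset.sum_image hFinj]
    refine Finset.sum_congr rfl fun d hd => ?_
    obtain ⟨_, _, _, _, heq⟩ := hF d hd
    rw [← heq]
  have hsub : ∑ x ∈ S.image F, (1 : ℝ) / (x.1 * x.2 ^ 2 : ℕ)
      ≤ ∑ x ∈ T' ×ˢ Finset.Icc 1 K, (1 : ℝ) / (x.1 * x.2 ^ 2 : ℕ) := by
    refine Finset.sum_le_sum_of_subset_of_nonneg ?_ (fun x _ _ => by positivity)
    intro x hx
    obtain ⟨d, hd, rfl⟩ := Finset.mem_image.mp hx
    exact hFmem d hd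
  have hprod : ∑ x ∈ T' ×ˢ Finset.Icc 1 K, (1 : ℝ) / (x.1 * x.2 ^ 2 : ℕ)
      = (∑ e ∈ T', (1 : ℝ) / e) * (∑ k ∈ Finset.Icc 1 K, (1 : ℝ) / (k : ℝ) ^ 2) := by
    rw [Finset.sum_product, Finset.sum_mul_sum]
    refine Finset.sum_congr rfl fun e _ => Finset.sum_congr rfl fun k _ => ?_
    push_cast
    rw [div_mul_div_comm, one_mul]
  have hT'nonneg : (0 : ℝ) ≤ ∑ e ∈ T', (1 : ℝ) / e :=
    Finset.sum_nonneg fun e _ => by positivity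
  have hsq : ∑ k ∈ Finset.Icc 1 K, (1 : ℝ) / (k : ℝ) ^ 2 ≤ 2 := by
    have := stmt5_sumsq K
    have : (0:ℝ) ≤ 1 / (K : ℝ) := by positivity
    linarith [stmt5_sumsq K]
  have := mul_le_mul_of_nonneg_left hsq hT'nonneg
  nlinarith [himg, hsub, hprod]
end

section
/- The product over all primes p of (1 + 1/(p(p−1))) converges and equals ζ(2)ζ(3)/ζ(6); moreover this value is strictly less than 2. -/
open Finset

noncomputable def frf (n : ℕ) : ℝ := 1 + 1 / ((n : ℝ) * ((n : ℝ) - 1))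
noncomputable def uf (m : ℕ) : ℝ := 1 + 1 / (m : ℝ) + 1 / (m : ℝ) ^ 2

lemma frf_one_le {n : ℕ} (hn : 2 ≤ n) : 1 ≤ frf n := by
  have h : (2:ℝ) ≤ (n:ℝ) := by exact_mod_cast hn
  have hpos : 0 < (n:ℝ) * ((n:ℝ) - 1) := by nlinarith
  unfold frf
  nlinarith [le_of_lt (div_pos one_pos hpos)]

lemma keyR {x : ℝ} (hx : 1 ≤ x) :
    (1 + 1/((x+1)*x)) * (1 + 1/(x+1) + 1/(x+1)^2) ≤ 1 + 1/x + 1/x^2 := by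
  have h1 : 0 < x := by linarith
  have h2 : (0:ℝ) < x + 1 := by linarith
  have lhs_eq : (1 + 1/((x+1)*x)) * (1 + 1/(x+1) + 1/(x+1)^2)
      = ((x^2+x+1)*(x^2+3*x+3))/((x^2+x)*(x+1)^2) := by
    field_simp
    ring
  have rhs_eq : 1 + 1/x + 1/x^2 = (x^2+x+1)/x^2 := by field_simp
  rw [lhs_eq, rhs_eq, div_le_div_iff₀ (by positivity) (by positivity)]
  nlinarith [sq_nonneg x, pow_pos h1 2, pow_pos h1 3]

lemma keyN {m : ℕ} (hm : 1 ≤ m) : frf (m+1) * uf (m+1) ≤ uf m := by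
  have hx : (1:ℝ) ≤ (m:ℝ) := by exact_mod_cast hm
  have := keyR hx
  unfold frf uf
  push_cast
  have e : ((m:ℝ)+1) - 1 = (m:ℝ) := by ring
  rw [e]
  convert this using 3 <;> ring


lemma one_le_prod_frf {s : Finset ℕ} (h : ∀ i ∈ s, 2 ≤ i) : 1 ≤ ∏ i ∈ s, frf i := by
  calc (1:ℝ) = ∏ _i ∈ s, 1 := (Finset.prod_const_one).symm
    _ ≤ ∏ i ∈ s, frf i :=
      Finset.prod_le_prod (fun i _ => zero_le_one) (fun i hi => frf_one_le (h i hi))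

lemma prod_frf_nonneg {s : Finset ℕ} (h : ∀ i ∈ s, 2 ≤ i) : 0 ≤ ∏ i ∈ s, frf i :=
  Finset.prod_nonneg fun i hi => le_trans zero_le_one (frf_one_le (h i hi))

lemma prod_frf_subset {t s : Finset ℕ} (h : t ⊆ s) (h2 : ∀ i ∈ s, 2 ≤ i) :
    ∏ i ∈ t, frf i ≤ ∏ i ∈ s, frf i := by
  rw [← Finset.prod_sdiff h]
  exact le_mul_of_one_le_left (prod_frf_nonneg fun i hi => h2 i (h hi))
    (one_le_prod_frf fun i hi => h2 i (Finset.mem_sdiff.mp hi).1)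

lemma tele (M : ℕ) (hM : 36 ≤ M) : (∏ n ∈ Icc 37 M, frf n) * uf M ≤ uf 36 := by
  induction M, hM using Nat.le_induction with
  | base => simp [Finset.Icc_eq_empty (by omega : ¬ (37:ℕ) ≤ 36)]
  | succ M hM ih =>
    rw [Finset.prod_Icc_succ_top (by omega : 37 ≤ M + 1), mul_assoc]
    have hnn : 0 ≤ ∏ n ∈ Icc 37 M, frf n :=
      prod_frf_nonneg fun n hn => by have := (Finset.mem_Icc.mp hn).1; omega
    calc (∏ n ∈ Icc 37 M, frf n) * (frf (M+1) * uf (M+1))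
        ≤ (∏ n ∈ Icc 37 M, frf n) * uf M :=
          mul_le_mul_of_nonneg_left (keyN (by omega)) hnn
      _ ≤ uf 36 := ih

lemma tail (t : Finset ℕ) (ht : ∀ n ∈ t, 37 ≤ n) : ∏ n ∈ t, frf n ≤ uf 36 := by
  set M := max 36 (t.sup id) with hMdef
  have hM : 36 ≤ M := le_max_left _ _
  have hsub : t ⊆ Icc 37 M := by
    intro n hn
    rw [Finset.mem_Icc]
    exact ⟨ht n hn, le_max_of_le_right (Finset.le_sup (f := id) hn)⟩
  have h1 : ∏ n ∈ t, frf n ≤ ∏ n ∈ Icc 37 M, frf n :=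
    prod_frf_subset hsub fun i hi => by have := (Finset.mem_Icc.mp hi).1; omega
  have h3 : (1:ℝ) ≤ uf M := by
    unfold uf
    have a1 : (0:ℝ) ≤ 1 / (M:ℝ) := by positivity
    have a2 : (0:ℝ) ≤ 1 / (M:ℝ)^2 := by positivity
    linarith
  have h2 := tele M hM
  have hnn : 0 ≤ ∏ n ∈ Icc 37 M, frf n :=
    prod_frf_nonneg fun n hn => by have := (Finset.mem_Icc.mp hn).1; omega
  calc ∏ n ∈ t, frf n ≤ ∏ n ∈ Icc 37 M, frf n := h1
    _ ≤ (∏ n ∈ Icc 37 M, frf n) * uf M := le_mul_of_one_le_right hnn h3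
    _ ≤ uf 36 := h2
def P31 : Finset ℕ := {2,3,5,7,11,13,17,19,23,29,31}

lemma P31_mem {n : ℕ} (hp : n.Prime) (hn : n ≤ 31) : n ∈ P31 := by
  have h2 := hp.two_le
  interval_cases n <;> first | (exact absurd hp (by decide)) | decide

lemma P31_two_le {n : ℕ} (hn : n ∈ P31) : 2 ≤ n := by
  fin_cases hn <;> norm_num

lemma head_val : (∏ n ∈ P31, frf n) * uf 36 ≤ 199/100 := by
  have h : ∏ n ∈ P31, frf n
      = frf 2 * (frf 3 * (frf 5 * (frf 7 * (frf 11 * (frf 13 * (frf 17 * (frf 19 *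
        (frf 23 * (frf 29 * frf 31))))))))) := by
    simp [P31, Finset.prod_insert, Finset.mem_insert, Finset.mem_singleton]
  rw [h]
  norm_num [frf, uf]

lemma prime_two_le (p : Nat.Primes) : (2:ℝ) ≤ (p:ℝ) := by
  exact_mod_cast p.prop.two_le

lemma denom_pos (p : Nat.Primes) : 0 < (p:ℝ) * ((p:ℝ) - 1) := by
  have := prime_two_le p; nlinarith

lemma sumg : Summable (fun p : Nat.Primes => 1 / ((p:ℝ) * ((p:ℝ) - 1))) := by
  have base : Summable (fun p : Nat.Primes => 2 * (p:ℝ) ^ (-2 : ℝ)) :=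
    (Nat.Primes.summable_rpow.mpr (by norm_num)).mul_left 2
  refine base.of_nonneg_of_le (fun p => (div_pos one_pos (denom_pos p)).le) (fun p => ?_)
  have h2 := prime_two_le p
  have hp : (0:ℝ) < (p:ℝ) := by linarith
  rw [Real.rpow_neg hp.le, show (2:ℝ) = ((2:ℕ):ℝ) by norm_num, Real.rpow_natCast,
    show ((2:ℕ):ℝ) * ((p:ℝ)^2)⁻¹ = 2/(p:ℝ)^2 by push_cast; ring,
    div_le_div_iff₀ (denom_pos p) (by positivity)]
  nlinarith

lemma Fpos (p : Nat.Primes) : 0 < 1 + 1 / ((p:ℝ) * ((p:ℝ) - 1)) := by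
  have := denom_pos p; positivity

lemma hlog : Summable (fun p : Nat.Primes => Real.log (1 + 1 / ((p:ℝ) * ((p:ℝ) - 1)))) := by
  refine sumg.of_nonneg_of_le (fun p => Real.log_nonneg (by
    have := (denom_pos p).le; nlinarith [le_of_lt (div_pos one_pos (denom_pos p))])) (fun p => ?_)
  have := Real.log_le_sub_one_of_pos (Fpos p)
  linarith

lemma hMul : Multipliable (fun p : Nat.Primes => (1 + 1 / ((p : ℝ) * ((p : ℝ) - 1)))) := by
  exact Real.multipliable_of_summable_log (fun p => Fpos p) hlog

lemma pow_sub_one_ne (p : Nat.Primes) (k : ℕ) (hk : 1 ≤ k) : ((p:ℂ))^k - 1 ≠ 0 := by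
  intro h
  have h1 : ((p:ℂ))^k = 1 := by rwa [sub_eq_zero] at h
  have h2 : (((p:ℕ)^k : ℕ) : ℂ) = ((1:ℕ) : ℂ) := by push_cast; simpa using h1
  have h3 : (p:ℕ)^k = 1 := Nat.cast_injective h2
  have h4 : 2^k ≤ (p:ℕ)^k := Nat.pow_le_pow_left p.prop.two_le k
  have h5 : 2^1 ≤ 2^k := Nat.pow_le_pow_right (by norm_num) hk
  omega

lemma hkey (p : Nat.Primes) :
    (1 - (p:ℂ)^(-(2:ℂ)))⁻¹ * (1 - (p:ℂ)^(-(3:ℂ)))⁻¹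
      = (1 - (p:ℂ)^(-(6:ℂ)))⁻¹ * ((1 + 1 / ((p:ℝ) * ((p:ℝ) - 1)) : ℝ) : ℂ) := by
  have hp0 : (p:ℂ) ≠ 0 := by
    exact Nat.cast_ne_zero.mpr p.prop.pos.ne'
  have e : ∀ k : ℕ, (p:ℂ) ^ (-(k:ℂ)) = ((p:ℂ)^k)⁻¹ := fun k => by
    rw [Complex.cpow_neg, Complex.cpow_natCast]
  have cast_eq : ((1 + 1 / ((p:ℝ) * ((p:ℝ) - 1)) : ℝ) : ℂ)
      = 1 + 1 / ((p:ℂ) * ((p:ℂ) - 1)) := by push_cast; ring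
  rw [show (-(2:ℂ)) = (-((2:ℕ):ℂ)) by norm_num, show (-(3:ℂ)) = (-((3:ℕ):ℂ)) by norm_num,
    show (-(6:ℂ)) = (-((6:ℕ):ℂ)) by norm_num, e 2, e 3, e 6, cast_eq]
  have h1 := pow_sub_one_ne p 1 le_rfl
  have h2 := pow_sub_one_ne p 2 (by norm_num)
  have h3 := pow_sub_one_ne p 3 (by norm_num)
  have h6 := pow_sub_one_ne p 6 (by norm_num)
  rw [pow_one] at h1
  field_simp
  ring

theorem stmt6 :
    Multipliable (fun p : Nat.Primes => (1 + 1 / ((p : ℝ) * ((p : ℝ) - 1)))) ∧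
    ((∏' p : Nat.Primes, (1 + 1 / ((p : ℝ) * ((p : ℝ) - 1))) : ℝ) : ℂ) =
      riemannZeta 2 * riemannZeta 3 / riemannZeta 6 ∧
    (∏' p : Nat.Primes, (1 + 1 / ((p : ℝ) * ((p : ℝ) - 1)))) < 2 := by
  refine ⟨hMul, ?_, ?_⟩
  · -- complex identity
    have hG : HasProd (fun p : Nat.Primes => ((1 + 1 / ((p:ℝ) * ((p:ℝ) - 1)) : ℝ) : ℂ))
        ((∏' p : Nat.Primes, (1 + 1 / ((p:ℝ) * ((p:ℝ) - 1))) : ℝ) : ℂ) := by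
      have h := hMul.hasProd.map Complex.ofRealHom.toMonoidHom Complex.continuous_ofReal
      simpa only [Function.comp_def, RingHom.toMonoidHom_eq_coe, MonoidHom.coe_coe,
        Complex.ofRealHom_eq_coe] using h
    have hA := riemannZeta_eulerProduct_hasProd (s := 2) (by norm_num)
    have hB := riemannZeta_eulerProduct_hasProd (s := 3) (by norm_num)
    have hC := riemannZeta_eulerProduct_hasProd (s := 6) (by norm_num)
    have hz6 : riemannZeta 6 ≠ 0 := riemannZeta_ne_zero_of_one_lt_re (by norm_num)
    have hAB := hA.mul hB
    have hCG := hC.mul hG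
    rw [show (fun p : Nat.Primes => (1 - (p:ℂ)^(-(2:ℂ)))⁻¹ * (1 - (p:ℂ)^(-(3:ℂ)))⁻¹)
        = fun p : Nat.Primes => (1 - (p:ℂ)^(-(6:ℂ)))⁻¹ *
          ((1 + 1 / ((p:ℝ) * ((p:ℝ) - 1)) : ℝ) : ℂ) from funext hkey] at hAB
    have hEq := hAB.unique hCG
    rw [hEq, mul_div_cancel_left₀ _ hz6]
  · -- bound
    have hle : (∏' p : Nat.Primes, (1 + 1 / ((p:ℝ) * ((p:ℝ) - 1)))) ≤ 199/100 := by
      refine hasProd_le_of_prod_le hMul.hasProd (fun s => ?_)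
      have himg : ∏ p ∈ s, (1 + 1 / ((p:ℝ) * ((p:ℝ) - 1)))
          = ∏ n ∈ s.image Subtype.val, frf n := by
        exact (Finset.prod_image (s := s) (f := frf) (g := Subtype.val) (fun x _ y _ h => Subtype.val_injective h)).symm
      set T := s.image Subtype.val with hT
      have hTprime : ∀ n ∈ T, n.Prime := fun n hn => by
        obtain ⟨p, _, rfl⟩ := Finset.mem_image.mp hn; exact p.prop
      rw [himg, ← Finset.prod_filter_mul_prod_filter_not T (· ≤ 31) frf]
      have hb1 : ∏ n ∈ T.filter (· ≤ 31), frf n ≤ ∏ n ∈ P31, frf n :=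
        prod_frf_subset (fun n hn => by
          obtain ⟨h1, h2⟩ := Finset.mem_filter.mp hn
          exact P31_mem (hTprime n h1) h2) (fun i hi => P31_two_le hi)
      have hb2 : ∏ n ∈ T.filter (fun n => ¬ n ≤ 31), frf n ≤ uf 36 := by
        refine tail _ (fun n hn => ?_)
        obtain ⟨h1, h2⟩ := Finset.mem_filter.mp hn
        have hp := hTprime n h1
        by_contra hlt
        push_neg at h2 hlt
        interval_cases n <;> exact absurd hp (by decide)
      calc (∏ n ∈ T.filter (· ≤ 31), frf n) * ∏ n ∈ T.filter (fun n => ¬ n ≤ 31), frf n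
          ≤ (∏ n ∈ P31, frf n) * uf 36 := by
            apply mul_le_mul hb1 hb2
            · exact prod_frf_nonneg fun i hi =>
                (hTprime i (Finset.mem_filter.mp hi).1).two_le
            · exact prod_frf_nonneg fun i hi => P31_two_le hi
        _ ≤ 199/100 := head_val
    exact lt_of_le_of_lt hle (by norm_num)
end

section
/- Let D ≥ 1 be a real number, let P be a set of primes all of which are ≤ D, and let E be the set of primes p ≤ D with p ∉ P. Then ∑_{d ≤ D, every prime factor of d lies in P} 1/d ≥ (∏_{p ∈ E} (1 − 1/p)) · log D. -/
open Finset in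
private lemma key_lemma (A : Finset ℕ) (h0 : 0 ∉ A)
    (hdc : ∀ d ∈ A, ∀ e, e ∣ d → e ∈ A) (p : ℕ) (hp : p.Prime) :
    (1 - 1 / (p : ℝ)) * ∑ d ∈ A, (1 : ℝ) / d ≤
      ∑ d ∈ A.filter (fun d => ¬ p ∣ d), (1 : ℝ) / d := by
  classical
  have hp1 : (1 : ℝ) ≤ p := by exact_mod_cast hp.one_lt.le
  have hsplit : (∑ d ∈ A, (1 : ℝ) / d) =
      (∑ d ∈ A.filter (fun d => ¬ p ∣ d), (1 : ℝ) / d) +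
      (∑ d ∈ A.filter (fun d => p ∣ d), (1 : ℝ) / d) := by
    rw [add_comm, Finset.sum_filter_add_sum_filter_not]
  have hmul : (∑ d ∈ A.filter (fun d => p ∣ d), (1 : ℝ) / d) ≤
      (1 / p) * ∑ d ∈ A, (1 : ℝ) / d := by
    have himg : ((A.filter (fun d => p ∣ d)).image (· / p)) ⊆ A := by
      intro e he
      obtain ⟨d, hd, rfl⟩ := Finset.mem_image.mp he
      exact hdc d (Finset.mem_filter.mp hd).1 _ (Nat.div_dvd_of_dvd (Finset.mem_filter.mp hd).2)
    have hinj : Set.InjOn (· / p) (A.filter (fun d => p ∣ d)) := by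
      intro a ha b hb hab
      have hpa := (Finset.mem_filter.mp ha).2
      have hpb := (Finset.mem_filter.mp hb).2
      have := congrArg (· * p) hab
      simpa [Nat.div_mul_cancel hpa, Nat.div_mul_cancel hpb] using this
    calc (∑ d ∈ A.filter (fun d => p ∣ d), (1 : ℝ) / d)
        = ∑ e ∈ (A.filter (fun d => p ∣ d)).image (· / p), (1 / p) * ((1 : ℝ) / e) := by
          rw [Finset.sum_image (fun a ha b hb => hinj ha hb)]
          refine Finset.sum_congr rfl fun d hd => ?_
          have hpd := (Finset.mem_filter.mp hd).2
          have hd0 : d ≠ 0 := fun h => h0 (h ▸ (Finset.mem_filter.mp hd).1)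
          have : ((d / p : ℕ) : ℝ) = (d : ℝ) / p := by
            rw [Nat.cast_div hpd (by positivity)]
          rw [this]
          field_simp
      _ ≤ ∑ e ∈ A, (1 / p) * ((1 : ℝ) / e) := by
          refine Finset.sum_le_sum_of_subset_of_nonneg himg fun e _ _ => by positivity
      _ = (1 / p) * ∑ e ∈ A, (1 : ℝ) / e := by rw [Finset.mul_sum]
  have := hsplit ▸ (by linarith [hmul] :
    (∑ d ∈ A, (1 : ℝ) / d) - (1 / p) * ∑ d ∈ A, (1 : ℝ) / d ≤
      (∑ d ∈ A, (1 : ℝ) / d) - (∑ d ∈ A.filter (fun d => p ∣ d), (1 : ℝ) / d))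
  linarith [this]

open Finset in
private lemma prod_lemma (E : Finset ℕ) (hE : ∀ p ∈ E, p.Prime) (A : Finset ℕ) (h0 : 0 ∉ A)
    (hdc : ∀ d ∈ A, ∀ e, e ∣ d → e ∈ A) :
    (∏ p ∈ E, (1 - 1 / (p : ℝ))) * ∑ d ∈ A, (1 : ℝ) / d ≤
      ∑ d ∈ A.filter (fun d => ∀ p ∈ E, ¬ p ∣ d), (1 : ℝ) / d := by
  classical
  induction E using Finset.induction with
  | empty => simp
  | @insert q E hq ih =>
    have hqp : q.Prime := hE q (mem_insert_self _ _)
    have hE' : ∀ p ∈ E, p.Prime := fun p hp => hE p (mem_insert_of_mem hp)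
    set A' := A.filter (fun d => ∀ p ∈ E, ¬ p ∣ d) with hA'
    have h0' : 0 ∉ A' := fun h => h0 (mem_filter.mp h).1
    have hdc' : ∀ d ∈ A', ∀ e, e ∣ d → e ∈ A' := by
      intro d hd e hed
      obtain ⟨hdA, hdE⟩ := mem_filter.mp hd
      exact mem_filter.mpr ⟨hdc d hdA e hed, fun p hp hpe => hdE p hp (hpe.trans hed)⟩
    have hkey := key_lemma A' h0' hdc' q hqp
    have hq1 : (0:ℝ) ≤ 1 - 1/(q:ℝ) := by
      have : (1:ℝ) ≤ q := by exact_mod_cast hqp.one_lt.le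
      have : 1/(q:ℝ) ≤ 1 := by
        rw [div_le_one (by linarith)]; linarith
      linarith
    calc (∏ p ∈ insert q E, (1 - 1 / (p : ℝ))) * ∑ d ∈ A, (1 : ℝ) / d
        = (1 - 1/(q:ℝ)) * ((∏ p ∈ E, (1 - 1 / (p : ℝ))) * ∑ d ∈ A, (1 : ℝ) / d) := by
          rw [Finset.prod_insert hq]; ring
      _ ≤ (1 - 1/(q:ℝ)) * ∑ d ∈ A', (1 : ℝ) / d := by
          exact mul_le_mul_of_nonneg_left (ih hE') hq1
      _ ≤ ∑ d ∈ A'.filter (fun d => ¬ q ∣ d), (1 : ℝ) / d := hkey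
      _ = ∑ d ∈ A.filter (fun d => ∀ p ∈ insert q E, ¬ p ∣ d), (1 : ℝ) / d := by
          apply Finset.sum_congr _ (fun _ _ => rfl)
          rw [hA', Finset.filter_filter]
          apply Finset.filter_congr
          intro d _
          simp only [mem_insert]
          constructor
          · rintro ⟨h1, h2⟩ p (rfl | hp)
            · exact h2
            · exact h1 p hp
          · intro h
            exact ⟨fun p hp => h p (Or.inr hp), h q (Or.inl rfl)⟩

open scoped Classical in
theorem stmt7 (D : ℝ) (hD : 1 ≤ D) (P : Set ℕ)
    (hP : ∀ p ∈ P, Nat.Prime p ∧ (p : ℝ) ≤ D) :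
    (∏ p ∈ (Finset.Icc 1 ⌊D⌋₊).filter (fun p : ℕ => Nat.Prime p ∧ p ∉ P),
        (1 - 1 / (p : ℝ))) * Real.log D ≤
      ∑ d ∈ (Finset.Icc 1 ⌊D⌋₊).filter
        (fun d : ℕ => ∀ p : ℕ, p.Prime → p ∣ d → p ∈ P), (1 : ℝ) / d := by
  set N := ⌊D⌋₊ with hN
  set A : Finset ℕ := Finset.Icc 1 N with hA
  set E : Finset ℕ := A.filter (fun p : ℕ => Nat.Prime p ∧ p ∉ P) with hE
  have h0 : 0 ∉ A := by simp [hA]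
  have hdc : ∀ d ∈ A, ∀ e, e ∣ d → e ∈ A := by
    intro d hd e hed
    obtain ⟨hd1, hd2⟩ := Finset.mem_Icc.mp hd
    refine Finset.mem_Icc.mpr ⟨Nat.one_le_iff_ne_zero.mpr ?_, (Nat.le_of_dvd (by omega) hed).trans hd2⟩
    rintro rfl
    omega
  have hEp : ∀ p ∈ E, p.Prime := fun p hp => (Finset.mem_filter.mp hp).2.1
  -- log D ≤ harmonic sum
  have hlog : Real.log D ≤ ∑ d ∈ A, (1 : ℝ) / d := by
    have h1 := log_le_harmonic_floor D (by linarith)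
    have h2 : ((harmonic N : ℚ) : ℝ) = ∑ d ∈ A, (1 : ℝ) / d := by
      rw [harmonic_eq_sum_Icc]
      push_cast
      simp [one_div, hA]
    calc Real.log D ≤ ((harmonic N : ℚ) : ℝ) := by exact_mod_cast h1
      _ = _ := h2
  have hprodnn : (0:ℝ) ≤ ∏ p ∈ E, (1 - 1 / (p : ℝ)) := by
    apply Finset.prod_nonneg
    intro p hp
    have h1 : (1:ℝ) ≤ p := by exact_mod_cast (hEp p hp).one_lt.le
    have : 1/(p:ℝ) ≤ 1 := by rw [div_le_one (by linarith)]; linarith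
    linarith
  have hstep := prod_lemma E hEp A h0 hdc
  have hsubset : A.filter (fun d => ∀ p ∈ E, ¬ p ∣ d) ⊆
      A.filter (fun d : ℕ => ∀ p : ℕ, p.Prime → p ∣ d → p ∈ P) := by
    intro d hd
    obtain ⟨hdA, hdE⟩ := Finset.mem_filter.mp hd
    refine Finset.mem_filter.mpr ⟨hdA, fun p hpp hpd => ?_⟩
    by_contra hpP
    obtain ⟨hd1, hd2⟩ := Finset.mem_Icc.mp hdA
    have hp1 : 1 ≤ p := hpp.one_lt.le
    have hpd2 : p ≤ N := le_trans (Nat.le_of_dvd hd1 hpd) hd2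
    exact hdE p (Finset.mem_filter.mpr ⟨Finset.mem_Icc.mpr ⟨hp1, hpd2⟩, hpp, hpP⟩) hpd
  calc (∏ p ∈ E, (1 - 1 / (p : ℝ))) * Real.log D
      ≤ (∏ p ∈ E, (1 - 1 / (p : ℝ))) * ∑ d ∈ A, (1 : ℝ) / d :=
        mul_le_mul_of_nonneg_left hlog hprodnn
    _ ≤ ∑ d ∈ A.filter (fun d => ∀ p ∈ E, ¬ p ∣ d), (1 : ℝ) / d := hstep
    _ ≤ _ := Finset.sum_le_sum_of_subset_of_nonneg hsubset (fun d _ _ => by positivity)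
end

section
/- Fix ε > 0. For every integer n ≥ 2, the sum of all positive integers m < n satisfying gcd(m,n) ≥ n/(log n)^{ε/4} is at most n (log n)^{ε/2}. -/
theorem stmt12 (ε : ℝ) (hε : 0 < ε) (n : ℕ) (hn : 2 ≤ n) :
    ∑ m ∈ (Finset.Ico 1 n).filter
        (fun m : ℕ => (n : ℝ) / (Real.log n) ^ (ε / 4) ≤ (Nat.gcd m n : ℝ)),
      (m : ℝ) ≤ (n : ℝ) * (Real.log n) ^ (ε / 2) := by
  have hn1 : (1 : ℝ) < n := by exact_mod_cast hn
  have hlogpos : 0 < Real.log n := Real.log_pos hn1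
  set L : ℝ := (Real.log n) ^ (ε / 4) with hL
  have hLpos : 0 < L := Real.rpow_pos_of_pos hlogpos _
  set N : ℕ := ⌊L⌋₊ with hN
  set S := (Finset.Ico 1 n).filter
      (fun m : ℕ => (n : ℝ) / L ≤ (Nat.gcd m n : ℝ)) with hS
  have hnpos : 0 < n := by omega
  -- facts about elements of S
  have hmem : ∀ m ∈ S, 1 ≤ m ∧ m < n ∧ 0 < Nat.gcd m n ∧
      n / Nat.gcd m n ≤ N ∧ 1 ≤ m / Nat.gcd m n ∧ m / Nat.gcd m n ≤ N := by
    intro m hm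
    rw [hS, Finset.mem_filter, Finset.mem_Ico] at hm
    obtain ⟨⟨h1, h2⟩, h3⟩ := hm
    set d := Nat.gcd m n with hd
    have hdpos : 0 < d := Nat.gcd_pos_of_pos_right m hnpos
    have hdvdn : d ∣ n := Nat.gcd_dvd_right m n
    have hdvdm : d ∣ m := Nat.gcd_dvd_left m n
    have hnd : (n : ℝ) ≤ d * L := by
      rw [div_le_iff₀ hLpos] at h3
      exact h3
    have hdiv : ((n / d : ℕ) : ℝ) ≤ L := by
      have hmul : (n / d : ℕ) * d = n := Nat.div_mul_cancel hdvdn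
      have : ((n / d : ℕ) : ℝ) * d = n := by exact_mod_cast hmul
      rw [← this] at hnd
      have hdR : (0 : ℝ) < d := by exact_mod_cast hdpos
      calc ((n / d : ℕ) : ℝ) = ((n / d : ℕ) : ℝ) * d / d := by field_simp
        _ ≤ d * L / d := by gcongr
        _ = L := by field_simp
    have hndN : n / d ≤ N := Nat.le_floor hdiv
    have hmd_lt : m / d < n / d := Nat.div_lt_div_of_lt_of_dvd hdvdn h2
    refine ⟨h1, h2, hdpos, hndN, ?_, by omega⟩
    exact Nat.one_le_div_iff hdpos |>.mpr (Nat.le_of_dvd (by omega) hdvdm)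
  -- cardinality bound
  have hcard : S.card ≤ N * N := by
    have hinj := Finset.card_le_card_of_injOn
      (f := fun m => (n / Nat.gcd m n, m / Nat.gcd m n))
      (t := (Finset.Icc 1 N) ×ˢ (Finset.Icc 1 N)) (s := S)
      (fun m hm => by
        obtain ⟨h1, h2, h3, h4, h5, h6⟩ := hmem m hm
        simp only [Finset.mem_coe, Finset.mem_product, Finset.mem_Icc]
        exact ⟨⟨Nat.one_le_div_iff h3 |>.mpr (Nat.le_of_dvd hnpos (Nat.gcd_dvd_right m n)), h4⟩,
          ⟨h5, h6⟩⟩)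
      (by
        intro m₁ hm₁ m₂ hm₂ heq
        simp only [Prod.mk.injEq] at heq
        obtain ⟨he1, he2⟩ := heq
        obtain ⟨_, _, hd1pos, _, _, _⟩ := hmem m₁ hm₁
        obtain ⟨_, _, hd2pos, _, _, _⟩ := hmem m₂ hm₂
        have hdvd1 : Nat.gcd m₁ n ∣ n := Nat.gcd_dvd_right m₁ n
        have hdvd2 : Nat.gcd m₂ n ∣ n := Nat.gcd_dvd_right m₂ n
        have hd : Nat.gcd m₁ n = Nat.gcd m₂ n := by
          have e1 : n / (n / Nat.gcd m₁ n) = Nat.gcd m₁ n :=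
            Nat.div_div_self hdvd1 (by omega)
          have e2 : n / (n / Nat.gcd m₂ n) = Nat.gcd m₂ n :=
            Nat.div_div_self hdvd2 (by omega)
          rw [← e1, ← e2, he1]
        have h1 : m₁ / Nat.gcd m₁ n * Nat.gcd m₁ n = m₁ :=
          Nat.div_mul_cancel (Nat.gcd_dvd_left m₁ n)
        have h2 : m₂ / Nat.gcd m₂ n * Nat.gcd m₂ n = m₂ :=
          Nat.div_mul_cancel (Nat.gcd_dvd_left m₂ n)
        rw [← h1, ← h2, he2, hd])
    simpa [Nat.card_Icc] using hinj
  -- each term is at most n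
  have hsum : ∑ m ∈ S, (m : ℝ) ≤ S.card • (n : ℝ) := by
    apply Finset.sum_le_card_nsmul
    intro m hm
    obtain ⟨_, h2, _⟩ := hmem m hm
    exact_mod_cast h2.le
  have hNL : (N : ℝ) ≤ L := Nat.floor_le hLpos.le
  have hLL : L * L = (Real.log n) ^ (ε / 2) := by
    rw [hL, ← Real.rpow_add hlogpos]
    ring_nf
  calc ∑ m ∈ S, (m : ℝ) ≤ S.card • (n : ℝ) := hsum
    _ = (S.card : ℝ) * n := by rw [nsmul_eq_mul]
    _ ≤ (N * N : ℕ) * n := by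
        apply mul_le_mul_of_nonneg_right _ (by positivity)
        exact_mod_cast hcard
    _ ≤ (L * L) * n := by
        apply mul_le_mul_of_nonneg_right _ (by positivity)
        push_cast
        exact mul_le_mul hNL hNL (by positivity) hLpos.le
    _ = (n : ℝ) * (Real.log n) ^ (ε / 2) := by rw [hLL]; ring
end

section
/- Fix ε > 0 and for each n ≥ 2 set E*_n = E_n^{(log n)^{ε/4}}. Then for every integer N ≥ 2, ∑_{1 ≤ m, n ≤ N, m ≠ n} λ(E*_m ∩ E*_n) ≤ 8 (∑_{n=1}^N ψ(n))² + 4 ∑_{n=2}^N ψ(n) (log n)^{ε/2}. -/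
set_option maxHeartbeats 1000000


open MeasureTheory

/-- `E ψ n D ⊆ ℝ/ℤ` is the union over `a ∈ {1, …, n}` with `gcd(a, n) ≤ D` of the
open intervals `((a - ψ n)/n, (a + ψ n)/n)` modulo `1`. -/
noncomputable def E (ψ : ℕ → ℝ) (n : ℕ) (D : ℝ) : Set UnitAddCircle :=
  ⋃ a ∈ {a : ℕ | 1 ≤ a ∧ a ≤ n ∧ (Nat.gcd a n : ℝ) ≤ D},
    (fun x : ℝ => (x : UnitAddCircle)) ''
      Set.Ioo (((a : ℝ) - ψ n) / n) (((a : ℝ) + ψ n) / n)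

/-- `Estar ψ ε n` is `E ψ n D` with `D = (log n)^(ε/4)` for `n ≥ 2`,
and with `D = 1` for `n ≤ 1`. -/
noncomputable def Estar (ψ : ℕ → ℝ) (ε : ℝ) (n : ℕ) : Set UnitAddCircle :=
  if n ≤ 1 then E ψ n 1 else E ψ n ((Real.log n) ^ (ε / 4))

namespace DS13

open MeasureTheory Set

open scoped Classical

noncomputable def Dfun (ε : ℝ) (n : ℕ) : ℝ := if n ≤ 1 then 1 else Real.log n ^ (ε / 4)

lemma Estar_eq (ψ : ℕ → ℝ) (ε : ℝ) (n : ℕ) : Estar ψ ε n = E ψ n (Dfun ε n) := by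
  simp only [Estar, Dfun]; split_ifs <;> rfl

lemma Dfun_nonneg (ε : ℝ) (n : ℕ) : 0 ≤ Dfun ε n := by
  simp only [Dfun]; split_ifs
  · norm_num
  · exact Real.rpow_nonneg (Real.log_natCast_nonneg n) _

def badP (m n : ℕ) (Dm Dn : ℝ) : Prop :=
  ∃ a b : ℕ, (1 ≤ a ∧ a ≤ m ∧ (Nat.gcd a m : ℝ) ≤ Dm) ∧
    (1 ≤ b ∧ b ≤ n ∧ (Nat.gcd b n : ℝ) ≤ Dn) ∧ a * n = b * m

lemma badP_symm {m n : ℕ} {Dm Dn : ℝ} (h : badP m n Dm Dn) : badP n m Dn Dm := by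
  obtain ⟨a, b, h1, h2, h3⟩ := h
  exact ⟨b, a, h2, h1, h3.symm⟩

lemma badP_facts {m n : ℕ} {Dm Dn : ℝ} (hm : 1 ≤ m) (hn : 1 ≤ n) (h : badP m n Dm Dn) :
    ((m / Nat.gcd m n : ℕ) : ℝ) ≤ Dm ∧ ((n / Nat.gcd m n : ℕ) : ℝ) ≤ Dn := by
  obtain ⟨a, b, ⟨ha1, ham, hagcd⟩, ⟨hb1, hbn, hbgcd⟩, hab⟩ := h
  set g := Nat.gcd m n with hgdef
  have hg : 0 < g := Nat.gcd_pos_of_pos_left n hm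
  have hgm : g ∣ m := Nat.gcd_dvd_left m n
  have hgn : g ∣ n := Nat.gcd_dvd_right m n
  have hcop : Nat.Coprime (m / g) (n / g) := Nat.coprime_div_gcd_div_gcd hg
  constructor
  · -- m/g ∣ a
    have hdvd : m ∣ a * n := ⟨b, by rw [hab, Nat.mul_comm]⟩
    have h2 : m / g * g ∣ a * (n / g * g) := by
      rw [Nat.div_mul_cancel hgm, Nat.div_mul_cancel hgn]; exact hdvd
    have h3 : m / g ∣ a * (n / g) := by
      rw [show a * (n / g * g) = a * (n / g) * g by ring] at h2
      exact (mul_dvd_mul_iff_right (show g ≠ 0 by omega)).mp h2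
    have h4 : m / g ∣ a := (Nat.Coprime.dvd_of_dvd_mul_right hcop h3)
    have h5 : m / g ∣ Nat.gcd a m := Nat.dvd_gcd h4 (Nat.div_dvd_of_dvd hgm)
    have h6 : (m / g : ℕ) ≤ Nat.gcd a m :=
      Nat.le_of_dvd (Nat.gcd_pos_of_pos_left m ha1) h5
    calc ((m / g : ℕ) : ℝ) ≤ (Nat.gcd a m : ℝ) := by exact_mod_cast h6
      _ ≤ Dm := hagcd
  · have hdvd : n ∣ b * m := ⟨a, by rw [← hab, Nat.mul_comm]⟩
    have h2 : n / g * g ∣ b * (m / g * g) := by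
      rw [Nat.div_mul_cancel hgm, Nat.div_mul_cancel hgn]; exact hdvd
    have h3 : n / g ∣ b * (m / g) := by
      rw [show b * (m / g * g) = b * (m / g) * g by ring] at h2
      exact (mul_dvd_mul_iff_right (show g ≠ 0 by omega)).mp h2
    have h4 : n / g ∣ b := (Nat.Coprime.dvd_of_dvd_mul_right hcop.symm h3)
    have h5 : n / g ∣ Nat.gcd b n := Nat.dvd_gcd h4 (Nat.div_dvd_of_dvd hgn)
    have h6 : (n / g : ℕ) ≤ Nat.gcd b n :=
      Nat.le_of_dvd (Nat.gcd_pos_of_pos_left n hb1) h5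
    calc ((n / g : ℕ) : ℝ) ≤ (Nat.gcd b n : ℝ) := by exact_mod_cast h6
      _ ≤ Dn := hbgcd

lemma grid : (⋃ z : ℤ, Ioc (-(z : ℝ)) (-(z : ℝ) + 1)) = univ := by
  ext x
  simp only [Set.mem_iUnion, Set.mem_Ioc, Set.mem_univ, iff_true]
  refine ⟨1 - ⌈x⌉, ?_, ?_⟩
  · push_cast
    have := Int.ceil_lt_add_one x
    linarith
  · push_cast
    have := Int.le_ceil x
    linarith

lemma vol_img_le {S : Set ℝ} (hS : MeasurableSet S)
    (him : MeasurableSet ((fun x : ℝ => (x : UnitAddCircle)) '' S)) :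
    volume ((fun x : ℝ => (x : UnitAddCircle)) '' S) ≤ volume S := by
  haveI : Fact ((0 : ℝ) < 1) := ⟨one_pos⟩
  rw [AddCircle.add_projection_respects_measure (1 : ℝ) 0 him]
  have hsub : QuotientAddGroup.mk ⁻¹' ((fun x : ℝ => (x : UnitAddCircle)) '' S) ∩ Ioc (0:ℝ) (0 + 1)
      ⊆ ⋃ z : ℤ, (fun x : ℝ => x + (z : ℝ)) '' (S ∩ Ioc (-(z:ℝ)) (-(z:ℝ) + 1)) := by
    rintro y ⟨hy1, hy2⟩
    obtain ⟨s, hsS, hs⟩ := hy1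
    have hz : ∃ z : ℤ, (z : ℝ) = s - y := by
      have h := QuotientAddGroup.eq_iff_sub_mem.mp hs
      obtain ⟨k, hk⟩ := AddSubgroup.mem_zmultiples_iff.mp h
      exact ⟨k, by simpa using hk⟩
    obtain ⟨z, hzeq⟩ := hz
    simp only [Set.mem_Ioc] at hy2
    refine Set.mem_iUnion.mpr ⟨-z, ⟨s, ⟨hsS, ?_, ?_⟩, ?_⟩⟩
    · push_cast; linarith [hy2.1]
    · push_cast; linarith [hy2.2]
    · push_cast; linarith
  calc volume (QuotientAddGroup.mk ⁻¹' ((fun x : ℝ => (x : UnitAddCircle)) '' S) ∩ Ioc (0:ℝ) (0+1))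
      ≤ volume (⋃ z : ℤ, (fun x : ℝ => x + (z : ℝ)) '' (S ∩ Ioc (-(z:ℝ)) (-(z:ℝ) + 1))) :=
        measure_mono hsub
    _ ≤ ∑' z : ℤ, volume ((fun x : ℝ => x + (z : ℝ)) '' (S ∩ Ioc (-(z:ℝ)) (-(z:ℝ) + 1))) :=
        measure_iUnion_le _
    _ = ∑' z : ℤ, volume (S ∩ Ioc (-(z:ℝ)) (-(z:ℝ) + 1)) := by
        congr 1; funext z
        rw [Set.image_add_right, measure_preimage_add_right]
    _ = volume (⋃ z : ℤ, S ∩ Ioc (-(z:ℝ)) (-(z:ℝ) + 1)) := by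
        rw [measure_iUnion]
        · intro z z' hzz
          simp only [Function.onFun]
          refine Set.disjoint_left.mpr ?_
          rintro x ⟨-, hx1⟩ ⟨-, hx2⟩
          simp only [Set.mem_Ioc] at hx1 hx2
          rcases lt_or_gt_of_ne hzz with h | h
          · have hz1 : (z:ℝ) + 1 ≤ z' := by exact_mod_cast by omega
            linarith [hx1.1, hx2.2]
          · have hz1 : (z':ℝ) + 1 ≤ z := by exact_mod_cast by omega
            linarith [hx2.1, hx1.2]
        · exact fun z => hS.inter measurableSet_Ioc
    _ = volume S := by rw [← Set.inter_iUnion, grid, Set.inter_univ]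

/-- At most `gcd m n` triples `(a,b,k)` with `a ∈ [1,m]`, `b ∈ [1,n]` can give the same
value of `a*n - b*m - k*m*n`. -/
lemma fiber_card (m n : ℕ) (hm : 1 ≤ m) (hn : 1 ≤ n) (F : Finset (ℕ × ℕ × ℤ)) (c : ℤ)
    (hF : ∀ x ∈ F, 1 ≤ x.1 ∧ x.1 ≤ m ∧ 1 ≤ x.2.1 ∧ x.2.1 ≤ n ∧
      (x.1 : ℤ) * n - (x.2.1 : ℤ) * m - x.2.2 * ((m : ℤ) * n) = c) :
    F.card ≤ Nat.gcd m n := by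
  rcases F.eq_empty_or_nonempty with h | ⟨x₀, hx₀⟩
  · simp [h]
  set g := Nat.gcd m n with hgdef
  have hg : 0 < g := Nat.gcd_pos_of_pos_left n hm
  have hgm : g ∣ m := Nat.gcd_dvd_left m n
  have hgn : g ∣ n := Nat.gcd_dvd_right m n
  have hm' : (g : ℤ) * (m / g : ℕ) = (m : ℤ) := by exact_mod_cast Nat.mul_div_cancel' hgm
  have hn' : (g : ℤ) * (n / g : ℕ) = (n : ℤ) := by exact_mod_cast Nat.mul_div_cancel' hgn
  have hcop : IsCoprime ((m / g : ℕ) : ℤ) ((n / g : ℕ) : ℤ) := by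
    rw [Int.isCoprime_iff_gcd_eq_one]
    exact_mod_cast Nat.coprime_div_gcd_div_gcd hg
  have key : ∀ x ∈ F, ((m / g : ℕ) : ℤ) ∣ ((x.1 : ℤ) - (x₀.1 : ℤ)) := by
    intro x hx
    have e1 := (hF x hx).2.2.2.2
    have e2 := (hF x₀ hx₀).2.2.2.2
    have hdvd : (m : ℤ) ∣ ((x.1 : ℤ) - (x₀.1 : ℤ)) * n := by
      refine ⟨((x.2.1 : ℤ) - (x₀.2.1 : ℤ)) + ((x.2.2 : ℤ) - (x₀.2.2 : ℤ)) * n, ?_⟩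
      linear_combination e1 - e2
    rw [← hm', ← hn'] at hdvd
    have h2 : ((m / g : ℕ) : ℤ) ∣ ((x.1 : ℤ) - (x₀.1 : ℤ)) * ((n / g : ℕ) : ℤ) := by
      have h3 : (g:ℤ) * (m / g : ℕ) ∣ (g:ℤ) * (((x.1 : ℤ) - (x₀.1 : ℤ)) * ((n / g : ℕ) : ℤ)) := by
        rw [show (g:ℤ) * (((x.1 : ℤ) - (x₀.1 : ℤ)) * ((n / g : ℕ) : ℤ)) =
          ((x.1 : ℤ) - (x₀.1 : ℤ)) * ((g:ℤ) * ((n / g : ℕ) : ℤ)) by ring]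
        exact hdvd
      exact (mul_dvd_mul_iff_left (show (g:ℤ) ≠ 0 by exact_mod_cast hg.ne')).mp h3
    exact hcop.dvd_of_dvd_mul_right h2
  haveI : NeZero g := ⟨hg.ne'⟩
  have hinj : Set.InjOn
      (fun x : ℕ × ℕ × ℤ => ((((x.1 : ℤ) - (x₀.1 : ℤ)) / ((m / g : ℕ) : ℤ) : ℤ) : ZMod g))
      (F : Set (ℕ × ℕ × ℤ)) := by
    intro x hx y hy hxy
    have dx := key x hx
    have dy := key y hy
    have hgd : (g : ℤ) ∣ ((x.1 : ℤ) - (x₀.1 : ℤ)) / ((m / g : ℕ) : ℤ) -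
        ((y.1 : ℤ) - (x₀.1 : ℤ)) / ((m / g : ℕ) : ℤ) :=
      Int.ModEq.dvd ((ZMod.intCast_eq_intCast_iff _ _ _).mp hxy.symm)
    have hxy1 : (x.1 : ℤ) = (y.1 : ℤ) := by
      obtain ⟨w, hw⟩ := hgd
      have hdm : (x.1 : ℤ) - (y.1 : ℤ) = ((g : ℤ) * w) * ((m / g : ℕ) : ℤ) := by
        have c1 := Int.ediv_mul_cancel dx
        have c2 := Int.ediv_mul_cancel dy
        have c3 : (x.1 : ℤ) - (y.1 : ℤ) = (((x.1 : ℤ) - (x₀.1 : ℤ)) / ((m / g : ℕ) : ℤ) -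
            ((y.1 : ℤ) - (x₀.1 : ℤ)) / ((m / g : ℕ) : ℤ)) * ((m / g : ℕ) : ℤ) := by
          linear_combination c2 - c1
        rw [c3, hw]
      have hmd : (m : ℤ) ∣ (x.1 : ℤ) - (y.1 : ℤ) := by
        rw [hdm, ← hm']; exact ⟨w, by ring⟩
      have hb1 := (hF x hx).1; have hb2 := (hF x hx).2.1
      have hb3 := (hF y hy).1; have hb4 := (hF y hy).2.1
      have l1 : (1:ℤ) ≤ (x.1:ℤ) := by exact_mod_cast hb1
      have l2 : (x.1:ℤ) ≤ m := by exact_mod_cast hb2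
      have l3 : (1:ℤ) ≤ (y.1:ℤ) := by exact_mod_cast hb3
      have l4 : (y.1:ℤ) ≤ m := by exact_mod_cast hb4
      have : (x.1 : ℤ) - (y.1 : ℤ) = 0 := by
        refine Int.eq_zero_of_abs_lt_dvd hmd ?_
        rw [abs_lt]; omega
      linarith
    have e1 := (hF x hx).2.2.2.2
    have e2 := (hF y hy).2.2.2.2
    have hmne : (0:ℤ) < (m:ℤ) := by exact_mod_cast hm
    have hnne : (0:ℤ) < (n:ℤ) := by exact_mod_cast hn
    have hb : (x.2.1 : ℤ) + x.2.2 * n = (y.2.1 : ℤ) + y.2.2 * n := by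
      have hmul : (m:ℤ) * ((x.2.1 : ℤ) + x.2.2 * n) = (m:ℤ) * ((y.2.1 : ℤ) + y.2.2 * n) := by
        linear_combination e2 - e1 + (n:ℤ) * hxy1
      exact mul_left_cancel₀ hmne.ne' hmul
    have hbb : (x.2.1 : ℤ) = (y.2.1 : ℤ) := by
      have hnd : (n : ℤ) ∣ (x.2.1 : ℤ) - (y.2.1 : ℤ) := ⟨y.2.2 - x.2.2, by linarith⟩
      have h5 := (hF x hx).2.2.1; have h6 := (hF x hx).2.2.2.1
      have h7 := (hF y hy).2.2.1; have h8 := (hF y hy).2.2.2.1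
      have l5 : (1:ℤ) ≤ (x.2.1:ℤ) := by exact_mod_cast h5
      have l6 : (x.2.1:ℤ) ≤ n := by exact_mod_cast h6
      have l7 : (1:ℤ) ≤ (y.2.1:ℤ) := by exact_mod_cast h7
      have l8 : (y.2.1:ℤ) ≤ n := by exact_mod_cast h8
      have : (x.2.1 : ℤ) - (y.2.1 : ℤ) = 0 := by
        refine Int.eq_zero_of_abs_lt_dvd hnd ?_
        rw [abs_lt]; omega
      linarith
    have hkk : x.2.2 = y.2.2 := by
      have : x.2.2 * (n:ℤ) = y.2.2 * n := by linarith
      exact mul_right_cancel₀ hnne.ne' this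
    have h1 : x.1 = y.1 := by exact_mod_cast hxy1
    have h2 : x.2.1 = y.2.1 := by exact_mod_cast hbb
    exact Prod.ext h1 (Prod.ext h2 hkk)
  have := Finset.card_le_card_of_injOn
    (fun x : ℕ × ℕ × ℤ => ((((x.1 : ℤ) - (x₀.1 : ℤ)) / ((m / g : ℕ) : ℤ) : ℤ) : ZMod g))
    (fun x _ => Finset.mem_univ _) hinj
  simpa [ZMod.card] using this

lemma pair_bound (ψ : ℕ → ℝ) (hψ0 : ∀ k, 0 ≤ ψ k) (hψh : ∀ k, ψ k ≤ 1/2)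
    (m n : ℕ) (hm : 1 ≤ m) (hn : 1 ≤ n) (Dm Dn : ℝ) :
    volume (E ψ m Dm ∩ E ψ n Dn) ≤ ENNReal.ofReal (8 * (ψ m * ψ n) +
      if badP m n Dm Dn then (Nat.gcd m n : ℝ) * min (2 * ψ m / m) (2 * ψ n / n) else 0) := by
  have hm0 : (0:ℝ) < m := by exact_mod_cast hm
  have hn0 : (0:ℝ) < n := by exact_mod_cast hn
  set Δ : ℝ := ψ m * n + ψ n * m with hΔdef
  have hΔ0 : 0 ≤ Δ := add_nonneg (mul_nonneg (hψ0 m) hn0.le) (mul_nonneg (hψ0 n) hm0.le)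
  set L : ℝ := min (2 * ψ m / m) (2 * ψ n / n) with hLdef
  have hL0 : 0 ≤ L :=
    le_min (div_nonneg (by linarith [hψ0 m]) hm0.le) (div_nonneg (by linarith [hψ0 n]) hn0.le)
  set Fa := (Finset.Icc 1 m).filter (fun a => (Nat.gcd a m : ℝ) ≤ Dm) with hFa
  set Fb := (Finset.Icc 1 n).filter (fun b => (Nat.gcd b n : ℝ) ≤ Dn) with hFb
  set P := Fa ×ˢ (Fb ×ˢ (Finset.Icc (-1 : ℤ) 1)) with hP
  set I : ℕ → Set ℝ := fun a => Ioo (((a:ℝ) - ψ m) / m) (((a:ℝ) + ψ m) / m) with hI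
  set J : ℕ → ℤ → Set ℝ :=
    fun b k => Ioo (((b:ℝ) - ψ n) / n + (k:ℝ)) (((b:ℝ) + ψ n) / n + (k:ℝ)) with hJdef
  set cnd : ℕ × ℕ × ℤ → Prop :=
    fun x => |(x.1:ℝ) * n - (x.2.1:ℝ) * m - (x.2.2:ℝ) * (m * n)| < Δ with hcnd
  have hcover : E ψ m Dm ∩ E ψ n Dn ⊆
      ⋃ x ∈ P, (fun r : ℝ => (r : UnitAddCircle)) '' (I x.1 ∩ J x.2.1 x.2.2) := by
    rintro y ⟨hy1, hy2⟩
    simp only [E, Set.mem_iUnion, Set.mem_setOf_eq, Set.mem_image] at hy1 hy2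
    obtain ⟨a, ⟨ha1, ham, hag⟩, s, hsI, hsy⟩ := hy1
    obtain ⟨b, ⟨hb1, hbn, hbg⟩, t, htJ, hty⟩ := hy2
    obtain ⟨hs1, hs2⟩ := hsI
    obtain ⟨ht1, ht2⟩ := htJ
    have hst : (s : UnitAddCircle) = (t : UnitAddCircle) := by rw [hsy, hty]
    obtain ⟨z, hz⟩ := AddSubgroup.mem_zmultiples_iff.mp (QuotientAddGroup.eq_iff_sub_mem.mp hst)
    have hz' : (z:ℝ) = s - t := by simpa using hz
    have ha1' : (1:ℝ) ≤ a := by exact_mod_cast ha1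
    have ham' : (a:ℝ) ≤ m := by exact_mod_cast ham
    have hb1' : (1:ℝ) ≤ b := by exact_mod_cast hb1
    have hbn' : (b:ℝ) ≤ n := by exact_mod_cast hbn
    have hsl : 0 < s := by
      have h0 : (0:ℝ) < ((a:ℝ) - ψ m)/m := div_pos (by linarith [hψh m]) hm0
      linarith
    have hsu : s < 1 + 1/2 := by
      have h0 : ((a:ℝ) + ψ m)/m ≤ 1 + 1/2 := by
        rw [div_le_iff₀ hm0]; nlinarith [hψh m]
      linarith
    have htl : 0 < t := by
      have h0 : (0:ℝ) < ((b:ℝ) - ψ n)/n := div_pos (by linarith [hψh n]) hn0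
      linarith
    have htu : t < 1 + 1/2 := by
      have h0 : ((b:ℝ) + ψ n)/n ≤ 1 + 1/2 := by
        rw [div_le_iff₀ hn0]; nlinarith [hψh n]
      linarith
    have hzb : -1 ≤ z ∧ z ≤ 1 := by
      constructor
      · have : (-2:ℝ) < (z:ℝ) := by linarith
        have : (-2:ℤ) < z := by exact_mod_cast this
        omega
      · have : (z:ℝ) < 2 := by linarith
        have : z < (2:ℤ) := by exact_mod_cast this
        omega
    refine Set.mem_iUnion₂.mpr ⟨(a, b, z), ?_, ⟨s, ⟨⟨hs1, hs2⟩, ?_, ?_⟩, hsy⟩⟩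
    · simp only [hP, Finset.mem_product, Finset.mem_Icc, hFa, hFb, Finset.mem_filter]
      exact ⟨⟨⟨ha1, ham⟩, hag⟩, ⟨⟨hb1, hbn⟩, hbg⟩, hzb.1, hzb.2⟩
    · linarith
    · linarith
  have step1 : volume (E ψ m Dm ∩ E ψ n Dn) ≤
      ∑ x ∈ P, volume ((fun r : ℝ => (r : UnitAddCircle)) '' (I x.1 ∩ J x.2.1 x.2.2)) :=
    (measure_mono hcover).trans (measure_biUnion_finset_le P _)
  have hterm : ∀ x ∈ P, volume ((fun r : ℝ => (r : UnitAddCircle)) '' (I x.1 ∩ J x.2.1 x.2.2)) ≤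
      ENNReal.ofReal (if cnd x then L else 0) := by
    intro x _
    have hmeas : MeasurableSet (I x.1 ∩ J x.2.1 x.2.2) := measurableSet_Ioo.inter measurableSet_Ioo
    have hopen : IsOpen (I x.1 ∩ J x.2.1 x.2.2) := isOpen_Ioo.inter isOpen_Ioo
    have him : MeasurableSet ((fun r : ℝ => (r : UnitAddCircle)) '' (I x.1 ∩ J x.2.1 x.2.2)) :=
      (QuotientAddGroup.isOpenMap_coe (I x.1 ∩ J x.2.1 x.2.2) hopen).measurableSet
    refine (vol_img_le hmeas him).trans ?_
    by_cases hc : cnd x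
    · rw [if_pos hc]
      rcases le_total (2 * ψ m / m) (2 * ψ n / n) with h | h
      · refine (measure_mono Set.inter_subset_left).trans ?_
        rw [hI]; rw [Real.volume_Ioo]
        apply ENNReal.ofReal_le_ofReal
        have he : ((x.1:ℝ) + ψ m)/m - ((x.1:ℝ) - ψ m)/m = 2 * ψ m / m := by
          field_simp; ring
        rw [he, hLdef, min_eq_left h]
      · refine (measure_mono Set.inter_subset_right).trans ?_
        rw [hJdef]; rw [Real.volume_Ioo]
        apply ENNReal.ofReal_le_ofReal
        have he : (((x.2.1:ℝ) + ψ n)/n + (x.2.2:ℝ)) - (((x.2.1:ℝ) - ψ n)/n + (x.2.2:ℝ))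
            = 2 * ψ n / n := by field_simp; ring
        rw [he, hLdef, min_eq_right h]
    · rw [if_neg hc]
      have hemp : I x.1 ∩ J x.2.1 x.2.2 = ∅ := by
        rw [Set.eq_empty_iff_forall_notMem]
        rintro w ⟨⟨hr1, hr2⟩, ⟨hr3, hr4⟩⟩
        apply hc
        rw [hcnd]
        simp only [abs_lt]
        have u1 : (x.1:ℝ) - ψ m < w * m := by rw [div_lt_iff₀ hm0] at hr1; linarith
        have u2 : w * m < (x.1:ℝ) + ψ m := by rw [lt_div_iff₀ hm0] at hr2; linarith
        have u3 : (x.2.1:ℝ) - ψ n < (w - (x.2.2:ℝ)) * n := by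
          have : ((x.2.1:ℝ) - ψ n) / n < w - (x.2.2:ℝ) := by linarith
          rw [div_lt_iff₀ hn0] at this; linarith
        have u4 : (w - (x.2.2:ℝ)) * n < (x.2.1:ℝ) + ψ n := by
          have : w - (x.2.2:ℝ) < ((x.2.1:ℝ) + ψ n) / n := by linarith
          rw [lt_div_iff₀ hn0] at this; linarith
        have v1 := mul_lt_mul_of_pos_right u1 hn0
        have v2 := mul_lt_mul_of_pos_right u2 hn0
        have v3 := mul_lt_mul_of_pos_right u3 hm0
        have v4 := mul_lt_mul_of_pos_right u4 hm0
        constructor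
        · nlinarith [v2, v3]
        · nlinarith [v1, v4]
      rw [hemp]
      simp
  have step2 : volume (E ψ m Dm ∩ E ψ n Dn) ≤ ENNReal.ofReal (∑ x ∈ P, if cnd x then L else 0) := by
    rw [ENNReal.ofReal_sum_of_nonneg (fun i _ => by split_ifs <;> simp [hL0])]
    exact step1.trans (Finset.sum_le_sum hterm)
  set T := P.filter cnd with hTdef
  have hsum : ∑ x ∈ P, (if cnd x then L else 0) = (T.card : ℝ) * L := by
    rw [← Finset.sum_filter, Finset.sum_const, nsmul_eq_mul]
  set g := Nat.gcd m n with hgdef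
  have hg1 : 1 ≤ g := Nat.gcd_pos_of_pos_left n hm
  set eZ : ℕ × ℕ × ℤ → ℤ := fun x => (x.1:ℤ) * n - (x.2.1:ℤ) * m - x.2.2 * ((m:ℤ) * n) with heZ
  have hTmem : ∀ x ∈ T, (1 ≤ x.1 ∧ x.1 ≤ m ∧ (Nat.gcd x.1 m : ℝ) ≤ Dm) ∧
      (1 ≤ x.2.1 ∧ x.2.1 ≤ n ∧ (Nat.gcd x.2.1 n : ℝ) ≤ Dn) ∧
      (-1 ≤ x.2.2 ∧ x.2.2 ≤ 1) ∧ |((eZ x : ℤ) : ℝ)| < Δ := by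
    intro x hx
    rw [hTdef, Finset.mem_filter] at hx
    obtain ⟨hxP, hxc⟩ := hx
    rw [hP] at hxP
    simp only [Finset.mem_product, Finset.mem_Icc, hFa, hFb, Finset.mem_filter] at hxP
    obtain ⟨⟨⟨hxa1, hxa2⟩, hxag⟩, ⟨⟨hxb1, hxb2⟩, hxbg⟩, hk1, hk2⟩ := hxP
    refine ⟨⟨hxa1, hxa2, hxag⟩, ⟨hxb1, hxb2, hxbg⟩, ⟨hk1, hk2⟩, ?_⟩
    rw [hcnd] at hxc
    rw [heZ]
    push_cast
    exact hxc
  set T0 := T.filter (fun x => eZ x = 0) with hT0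
  set T1 := T.filter (fun x => ¬ eZ x = 0) with hT1
  have hcard : T.card = T0.card + T1.card :=
    (Finset.card_filter_add_card_filter_not (fun x => eZ x = 0)).symm
  have hT0g : T0.card ≤ g := by
    refine fiber_card m n hm hn T0 0 (fun x hx => ?_)
    have hxT : x ∈ T := Finset.mem_of_mem_filter x hx
    have h0 := (Finset.mem_filter.mp hx).2
    have h1 := hTmem x hxT
    exact ⟨h1.1.1, h1.1.2.1, h1.2.1.1, h1.2.1.2.1, h0⟩
  have hT0bad : ¬ badP m n Dm Dn → T0 = ∅ := by
    intro hb
    rw [Finset.eq_empty_iff_forall_notMem]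
    intro x hx
    apply hb
    have hxT : x ∈ T := Finset.mem_of_mem_filter x hx
    have h0 := (Finset.mem_filter.mp hx).2
    obtain ⟨⟨ha1, ham, hag⟩, ⟨hb1, hbn, hbg⟩, ⟨hk1, hk2⟩, _⟩ := hTmem x hxT
    obtain ⟨a, b, k⟩ := x
    simp only at ha1 ham hag hb1 hbn hbg hk1 hk2
    rw [heZ] at h0
    simp only at h0
    have hA1 : (1:ℤ) ≤ (a:ℤ) := by exact_mod_cast ha1
    have hAm : (a:ℤ) ≤ m := by exact_mod_cast ham
    have hB1 : (1:ℤ) ≤ (b:ℤ) := by exact_mod_cast hb1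
    have hBn : (b:ℤ) ≤ n := by exact_mod_cast hbn
    have hM1 : (1:ℤ) ≤ (m:ℤ) := by exact_mod_cast hm
    have hN1 : (1:ℤ) ≤ (n:ℤ) := by exact_mod_cast hn
    have hk0 : k = 0 := by
      interval_cases k
      · exfalso; nlinarith [h0]
      · rfl
      · exfalso; nlinarith [h0]
    subst hk0
    have heq : (a:ℤ) * n = (b:ℤ) * m := by linarith [h0]
    exact ⟨a, b, ⟨ha1, ham, hag⟩, ⟨hb1, hbn, hbg⟩, by exact_mod_cast heq⟩
  set r : ℤ := ⌈Δ / (g:ℝ)⌉ - 1 with hr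
  set Jset := (Finset.Icc (-r) r).erase 0 with hJs
  have hT1sub : T1 ⊆ Jset.biUnion (fun j => T.filter (fun x => eZ x = (g:ℤ) * j)) := by
    intro x hx
    have hxT : x ∈ T := Finset.mem_of_mem_filter x hx
    have hne : eZ x ≠ 0 := (Finset.mem_filter.mp hx).2
    have hdvd : (g:ℤ) ∣ eZ x := by
      have d1 : (g:ℤ) ∣ (m:ℤ) := Int.natCast_dvd_natCast.mpr (Nat.gcd_dvd_left m n)
      have d2 : (g:ℤ) ∣ (n:ℤ) := Int.natCast_dvd_natCast.mpr (Nat.gcd_dvd_right m n)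
      rw [heZ]
      exact dvd_sub (dvd_sub (Dvd.dvd.mul_left d2 _) (Dvd.dvd.mul_left d1 _))
        (Dvd.dvd.mul_left (d1.mul_right _) _)
    have hj : eZ x = (g:ℤ) * (eZ x / (g:ℤ)) := (Int.mul_ediv_cancel' hdvd).symm
    refine Finset.mem_biUnion.mpr ⟨eZ x / (g:ℤ), ?_, Finset.mem_filter.mpr ⟨hxT, hj⟩⟩
    have hj0 : eZ x / (g:ℤ) ≠ 0 := by
      intro h
      rw [h, mul_zero] at hj
      exact hne hj
    have habs : |((eZ x : ℤ) : ℝ)| < Δ := (hTmem x hxT).2.2.2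
    have hg0R : (0:ℝ) < (g:ℝ) := by exact_mod_cast hg1
    have hjR : |((eZ x / (g:ℤ) : ℤ) : ℝ)| < Δ / (g:ℝ) := by
      rw [lt_div_iff₀ hg0R]
      have he2 : |((eZ x : ℤ) : ℝ)| = |((eZ x / (g:ℤ) : ℤ) : ℝ)| * (g:ℝ) := by
        nth_rewrite 1 [hj]
        push_cast
        rw [abs_mul, abs_of_pos hg0R]
        ring
      linarith [he2 ▸ habs]
    have hjZ : |eZ x / (g:ℤ)| ≤ r := by
      have h1 : |eZ x / (g:ℤ)| < ⌈Δ / (g:ℝ)⌉ := by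
        rw [Int.lt_ceil]
        calc (↑|eZ x / (g:ℤ)| : ℝ) = |((eZ x / (g:ℤ) : ℤ) : ℝ)| := by push_cast; ring
          _ < Δ / (g:ℝ) := hjR
      omega
    exact Finset.mem_erase.mpr ⟨hj0, Finset.mem_Icc.mpr (abs_le.mp hjZ)⟩
  have hT1card : T1.card ≤ Jset.card * g := by
    refine (Finset.card_le_card hT1sub).trans (Finset.card_biUnion_le.trans ?_)
    calc ∑ j ∈ Jset, (T.filter (fun x => eZ x = (g:ℤ) * j)).card
        ≤ ∑ _j ∈ Jset, g := by
          refine Finset.sum_le_sum (fun j _ => ?_)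
          refine fiber_card m n hm hn _ ((g:ℤ) * j) (fun x hx => ?_)
          have hxT : x ∈ T := Finset.mem_of_mem_filter x hx
          have h0 := (Finset.mem_filter.mp hx).2
          have h1 := hTmem x hxT
          exact ⟨h1.1.1, h1.1.2.1, h1.2.1.1, h1.2.1.2.1, h0⟩
      _ = Jset.card * g := by rw [Finset.sum_const, smul_eq_mul]
  have hJcard : Jset.card ≤ 2 * r.toNat := by
    rcases le_or_gt 0 r with h | h
    · have h0 : (0:ℤ) ∈ Finset.Icc (-r) r := Finset.mem_Icc.mpr ⟨by omega, h⟩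
      rw [hJs, Finset.card_erase_of_mem h0, Int.card_Icc]
      omega
    · rw [hJs, Finset.Icc_eq_empty (by omega)]
      simp
  have hg0R : (0:ℝ) < (g:ℝ) := by exact_mod_cast hg1
  have hrg : (r.toNat : ℝ) * g ≤ Δ := by
    rcases le_or_gt r 0 with h | h
    · have : r.toNat = 0 := Int.toNat_of_nonpos h
      rw [this]
      simpa using hΔ0
    · have he1 : (r.toNat : ℝ) = ((r:ℤ) : ℝ) := by exact_mod_cast Int.toNat_of_nonneg h.le
      rw [he1]
      have he2 : ((r:ℤ):ℝ) < Δ / (g:ℝ) := by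
        have := Int.ceil_lt_add_one (Δ / (g:ℝ))
        rw [hr]
        push_cast
        linarith
      calc ((r:ℤ):ℝ) * g ≤ (Δ / (g:ℝ)) * g := mul_le_mul_of_nonneg_right he2.le hg0R.le
        _ = Δ := div_mul_cancel₀ _ hg0R.ne'
  have hbound : (T.card : ℝ) * L ≤ 8 * (ψ m * ψ n) +
      (if badP m n Dm Dn then (g:ℝ) * L else 0) := by
    have l1 : L ≤ 2 * ψ n / n := min_le_right _ _
    have l2 : L ≤ 2 * ψ m / m := min_le_left _ _
    have e1 : (ψ m * n) * (2 * ψ n / n) = 2 * (ψ m * ψ n) := by field_simp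
    have e2 : (ψ n * m) * (2 * ψ m / m) = 2 * (ψ m * ψ n) := by field_simp
    have b1 : (ψ m * n) * L ≤ 2 * (ψ m * ψ n) := by
      calc (ψ m * n) * L ≤ (ψ m * n) * (2 * ψ n / n) :=
            mul_le_mul_of_nonneg_left l1 (mul_nonneg (hψ0 m) hn0.le)
        _ = 2 * (ψ m * ψ n) := e1
    have b2 : (ψ n * m) * L ≤ 2 * (ψ m * ψ n) := by
      calc (ψ n * m) * L ≤ (ψ n * m) * (2 * ψ m / m) :=
            mul_le_mul_of_nonneg_left l2 (mul_nonneg (hψ0 n) hm0.le)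
        _ = 2 * (ψ m * ψ n) := e2
    have h2ΔL : 2 * Δ * L ≤ 8 * (ψ m * ψ n) := by
      have : 2 * Δ * L = 2 * ((ψ m * n) * L) + 2 * ((ψ n * m) * L) := by rw [hΔdef]; ring
      linarith
    have hT1R : (T1.card : ℝ) * L ≤ 2 * Δ * L := by
      have hc1 : (T1.card : ℝ) ≤ 2 * ((r.toNat:ℝ) * g) := by
        calc (T1.card : ℝ) ≤ ((Jset.card * g : ℕ) : ℝ) := by exact_mod_cast hT1card
          _ ≤ ((2 * r.toNat * g : ℕ) : ℝ) := by
              have : Jset.card * g ≤ 2 * r.toNat * g := Nat.mul_le_mul_right g hJcard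
              exact_mod_cast this
          _ = 2 * ((r.toNat:ℝ) * g) := by push_cast; ring
      calc (T1.card:ℝ) * L ≤ (2 * ((r.toNat:ℝ) * g)) * L := mul_le_mul_of_nonneg_right hc1 hL0
        _ ≤ (2 * Δ) * L := mul_le_mul_of_nonneg_right (by linarith) hL0
        _ = 2 * Δ * L := by ring
    have hT0R : (T0.card : ℝ) * L ≤ (if badP m n Dm Dn then (g:ℝ) * L else 0) := by
      by_cases hb : badP m n Dm Dn
      · rw [if_pos hb]
        exact mul_le_mul_of_nonneg_right (by exact_mod_cast hT0g) hL0
      · rw [if_neg hb, hT0bad hb]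
        simp
    have : (T.card:ℝ) * L = (T0.card:ℝ) * L + (T1.card:ℝ) * L := by
      rw [hcard]; push_cast; ring
    linarith
  calc volume (E ψ m Dm ∩ E ψ n Dn) ≤ ENNReal.ofReal (∑ x ∈ P, if cnd x then L else 0) := step2
    _ = ENNReal.ofReal ((T.card : ℝ) * L) := by rw [hsum]
    _ ≤ _ := ENNReal.ofReal_le_ofReal hbound

lemma sum_inv_sq (N : ℕ) : ∑ ν ∈ Finset.Icc 1 N, (1:ℝ) / (ν:ℝ)^2 ≤ 2 - 1/(N:ℝ) := by
  induction N with
  | zero => simp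
  | succ K ih =>
    rcases Nat.eq_zero_or_pos K with rfl | hK
    · norm_num
    · rw [Finset.sum_Icc_succ_top (by omega : 1 ≤ K + 1)]
      have hK0 : (0:ℝ) < K := by exact_mod_cast hK
      have hstep : (1:ℝ)/((K:ℝ)+1)^2 ≤ 1/(K:ℝ) - 1/((K:ℝ)+1) := by
        rw [div_sub_div _ _ (ne_of_gt hK0) (by positivity)]
        rw [div_le_div_iff₀ (by positivity) (by positivity)]
        nlinarith
      have hcast : ((K+1 : ℕ):ℝ) = (K:ℝ)+1 := by push_cast; ring
      rw [hcast]
      linarith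

lemma cnt_le (m : ℕ) (Dm : ℝ) (hD : 0 ≤ Dm) :
    (((m.divisors.filter (fun d : ℕ => (d:ℝ) ≤ Dm)).card : ℕ) : ℝ) ≤ Dm := by
  have hsub : m.divisors.filter (fun d : ℕ => (d:ℝ) ≤ Dm) ⊆ Finset.Icc 1 ⌊Dm⌋₊ := by
    intro d hd
    rw [Finset.mem_filter, Nat.mem_divisors] at hd
    obtain ⟨⟨hdvd, hm0⟩, hdD⟩ := hd
    exact Finset.mem_Icc.mpr ⟨Nat.pos_of_dvd_of_pos hdvd (Nat.pos_of_ne_zero hm0), Nat.le_floor hdD⟩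
  calc (((m.divisors.filter (fun d : ℕ => (d:ℝ) ≤ Dm)).card : ℕ) : ℝ)
      ≤ ((Finset.Icc 1 ⌊Dm⌋₊).card : ℝ) := by exact_mod_cast Finset.card_le_card hsub
    _ = (⌊Dm⌋₊ : ℝ) := by rw [Nat.card_Icc]; simp
    _ ≤ Dm := Nat.floor_le hD

lemma tau_le (m : ℕ) (hm : 3 ≤ m) : m.divisors.card ≤ m - 1 := by
  have hsub : m.divisors ⊆ (Finset.Icc 1 m).erase (m - 1) := by
    intro d hd
    rw [Nat.mem_divisors] at hd
    refine Finset.mem_erase.mpr ⟨?_, Finset.mem_Icc.mpr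
      ⟨Nat.pos_of_dvd_of_pos hd.1 (by omega), Nat.le_of_dvd (by omega) hd.1⟩⟩
    rintro rfl
    obtain ⟨c, hc⟩ := hd.1
    rcases c with _ | _ | c
    · omega
    · omega
    · have h2 : (m - 1) * (c + 2) ≥ (m - 1) * 2 := Nat.mul_le_mul_left _ (by omega)
      have h3 : m ≥ (m - 1) * 2 := by
        calc m = (m - 1) * (c + 2) := hc
          _ ≥ (m - 1) * 2 := h2
      omega
  calc m.divisors.card ≤ ((Finset.Icc 1 m).erase (m - 1)).card := Finset.card_le_card hsub
    _ = (Finset.Icc 1 m).card - 1 := Finset.card_erase_of_mem (Finset.mem_Icc.mpr ⟨by omega, by omega⟩)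
    _ = m - 1 := by rw [Nat.card_Icc]; omega

noncomputable def alpha (ψ : ℕ → ℝ) (ε : ℝ) (m n : ℕ) : ℝ :=
  if 2 ≤ m ∧ badP m n (Dfun ε m) (Dfun ε n)
  then ψ m * Dfun ε m * (if n = 1 then 2 else 1) / ((n / Nat.gcd m n : ℕ) : ℝ)^2
  else 0

lemma alpha_nonneg (ψ : ℕ → ℝ) (hψ0 : ∀ k, 0 ≤ ψ k) (ε : ℝ) (m n : ℕ) :
    0 ≤ alpha ψ ε m n := by
  rw [alpha]
  split_ifs with h1 h2
  · exact div_nonneg (mul_nonneg (mul_nonneg (hψ0 m) (Dfun_nonneg ε m)) (by norm_num)) (sq_nonneg _)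
  · exact div_nonneg (mul_nonneg (mul_nonneg (hψ0 m) (Dfun_nonneg ε m)) (by norm_num)) (sq_nonneg _)
  · exact le_refl 0

lemma badterm_le (ψ : ℕ → ℝ) (hψ0 : ∀ k, 0 ≤ ψ k) (ε : ℝ)
    (m n : ℕ) (hm : 1 ≤ m) (hn : 1 ≤ n) (hne : m ≠ n)
    (hb : badP m n (Dfun ε m) (Dfun ε n)) :
    (Nat.gcd m n : ℝ) * min (2 * ψ m / m) (2 * ψ n / n) ≤ alpha ψ ε m n + alpha ψ ε n m := by
  set g := Nat.gcd m n with hg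
  have hg1 : 1 ≤ g := Nat.gcd_pos_of_pos_left n hm
  set μ := m / g with hμ
  set ν := n / g with hν
  have hgm : g ∣ m := Nat.gcd_dvd_left m n
  have hgn : g ∣ n := Nat.gcd_dvd_right m n
  have hμ1 : 1 ≤ μ := Nat.div_pos (Nat.le_of_dvd (by omega) hgm) (by omega)
  have hν1 : 1 ≤ ν := Nat.div_pos (Nat.le_of_dvd (by omega) hgn) (by omega)
  have hmgμ : (m:ℝ) = (g:ℝ) * (μ:ℝ) := by exact_mod_cast (Nat.mul_div_cancel' hgm).symm
  have hngν : (n:ℝ) = (g:ℝ) * (ν:ℝ) := by exact_mod_cast (Nat.mul_div_cancel' hgn).symm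
  obtain ⟨hμD, hνD⟩ := badP_facts hm hn hb
  have hg0 : (0:ℝ) < g := by exact_mod_cast hg1
  have hμ0 : (0:ℝ) < μ := by exact_mod_cast hμ1
  have hν0 : (0:ℝ) < ν := by exact_mod_cast hν1
  have hDm0 : 0 ≤ Dfun ε m := Dfun_nonneg ε m
  have hDn0 : 0 ≤ Dfun ε n := Dfun_nonneg ε n
  have hkey : (g:ℝ) * min (2 * ψ m / m) (2 * ψ n / n)
      = min (2 * ψ m / (μ:ℝ)) (2 * ψ n / (ν:ℝ)) := by
    rw [mul_min_of_nonneg _ _ hg0.le]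
    congr 1
    · rw [hmgμ]; field_simp
    · rw [hngν]; field_simp
  rw [hkey]
  by_cases hn1 : n = 1
  · subst hn1
    have hm2 : 2 ≤ m := by omega
    have hgm1 : g = 1 := by rw [hg, Nat.gcd_one_right]
    have hμm : μ = m := by rw [hμ, hgm1, Nat.div_one]
    have hνn : ν = 1 := by rw [hν, hgm1, Nat.div_one]
    have hDm1 : (m:ℝ) ≤ Dfun ε m := by simpa using hμD
    have hα : alpha ψ ε m 1 = 2 * (ψ m * Dfun ε m) := by
      rw [alpha, if_pos ⟨hm2, hb⟩, if_pos rfl]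
      rw [← hν, hνn]
      norm_num
      ring
    have hα2 : alpha ψ ε 1 m = 0 := by
      rw [alpha, if_neg]
      rintro ⟨h2, -⟩
      omega
    rw [hα, hα2, add_zero]
    have h1 : min (2 * ψ m / (μ:ℝ)) (2 * ψ 1 / (ν:ℝ)) ≤ 2 * ψ m / (m:ℝ) := by
      rw [hμm]; exact min_le_left _ _
    have h2 : 2 * ψ m / (m:ℝ) ≤ 2 * ψ m := by
      apply div_le_self (by linarith [hψ0 m])
      exact_mod_cast hm
    have hD1 : (1:ℝ) ≤ Dfun ε m := by
      have : (2:ℝ) ≤ (m:ℝ) := by exact_mod_cast hm2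
      linarith
    nlinarith [hψ0 m]
  · by_cases hm1 : m = 1
    · subst hm1
      have hn2 : 2 ≤ n := by omega
      have hgn1 : g = 1 := by rw [hg, Nat.gcd_one_left]
      have hμm : μ = 1 := by rw [hμ, hgn1, Nat.div_one]
      have hνn : ν = n := by rw [hν, hgn1, Nat.div_one]
      have hDn1 : (n:ℝ) ≤ Dfun ε n := by simpa using hνD
      have hα : alpha ψ ε n 1 = 2 * (ψ n * Dfun ε n) := by
        rw [alpha, if_pos ⟨hn2, badP_symm hb⟩, if_pos rfl]
        rw [Nat.gcd_one_right]
        norm_num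
        ring
      have hα2 : alpha ψ ε 1 n = 0 := by
        rw [alpha, if_neg]
        rintro ⟨h2, -⟩
        omega
      rw [hα2, hα, zero_add]
      have h1 : min (2 * ψ 1 / (μ:ℝ)) (2 * ψ n / (ν:ℝ)) ≤ 2 * ψ n / (n:ℝ) := by
        rw [hνn]; exact min_le_right _ _
      have h2 : 2 * ψ n / (n:ℝ) ≤ 2 * ψ n := by
        apply div_le_self (by linarith [hψ0 n])
        exact_mod_cast hn
      have hD1 : (1:ℝ) ≤ Dfun ε n := by
        have : (2:ℝ) ≤ (n:ℝ) := by exact_mod_cast hn2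
        linarith
      nlinarith [hψ0 n]
    · have hm2 : 2 ≤ m := by omega
      have hn2 : 2 ≤ n := by omega
      have hα1 : alpha ψ ε m n = ψ m * Dfun ε m / (ν:ℝ)^2 := by
        rw [alpha, if_pos ⟨hm2, hb⟩, if_neg hn1, mul_one, ← hν]
      have hα2 : alpha ψ ε n m = ψ n * Dfun ε n / (μ:ℝ)^2 := by
        rw [alpha, if_pos ⟨hn2, badP_symm hb⟩, if_neg hm1, mul_one, Nat.gcd_comm n m, ← hμ]
      rw [hα1, hα2]
      set x := ψ m * Dfun ε m / (ν:ℝ)^2 with hx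
      set y := ψ n * Dfun ε n / (μ:ℝ)^2 with hy
      set A := 2 * ψ m / (μ:ℝ) with hA
      set B := 2 * ψ n / (ν:ℝ) with hB
      have hA0 : 0 ≤ A := div_nonneg (by linarith [hψ0 m]) hμ0.le
      have hB0 : 0 ≤ B := div_nonneg (by linarith [hψ0 n]) hν0.le
      have hx0 : 0 ≤ x := div_nonneg (mul_nonneg (hψ0 m) hDm0) (sq_nonneg _)
      have hy0 : 0 ≤ y := div_nonneg (mul_nonneg (hψ0 n) hDn0) (sq_nonneg _)
      have hμν : (μ:ℝ) * (ν:ℝ) ≤ Dfun ε m * Dfun ε n :=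
        mul_le_mul hμD hνD hν0.le (le_trans hμ0.le hμD)
      have hAB : A * B ≤ 4 * (x * y) := by
        rw [hA, hB, hx, hy, div_mul_div_comm, div_mul_div_comm]
        rw [show (4:ℝ) * (ψ m * Dfun ε m * (ψ n * Dfun ε n) / ((ν:ℝ)^2 * (μ:ℝ)^2)) =
          4 * (ψ m * Dfun ε m * (ψ n * Dfun ε n)) / ((ν:ℝ)^2 * (μ:ℝ)^2) from by ring]
        rw [div_le_div_iff₀ (by positivity) (by positivity)]
        have key := mul_le_mul_of_nonneg_left hμν
          (mul_nonneg (mul_nonneg (mul_nonneg (hψ0 m) (hψ0 n)) hμ0.le) hν0.le)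
        nlinarith [key]
      have h4xy : 4 * (x * y) ≤ (x + y)^2 := by nlinarith [sq_nonneg (x - y)]
      have hmin2 : (min A B)^2 ≤ A * B := by
        rcases le_total A B with h | h
        · rw [min_eq_left h, sq]
          exact mul_le_mul_of_nonneg_left h hA0
        · rw [min_eq_right h, sq]
          exact mul_le_mul_of_nonneg_right h hB0
      have hfinal : (min A B)^2 ≤ (x + y)^2 := by linarith
      have hminnn : 0 ≤ min A B := le_min hA0 hB0
      nlinarith [hfinal, hminnn, add_nonneg hx0 hy0]

lemma per_m (ψ : ℕ → ℝ) (hψ0 : ∀ k, 0 ≤ ψ k) (ε : ℝ) (hε : 0 < ε) (N m : ℕ) (hN : 1 ≤ N) :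
    ∑ n ∈ (Finset.Icc 1 N).filter (fun n => m ≠ n), alpha ψ ε m n ≤
      if 2 ≤ m then 2 * ψ m * (Real.log m) ^ (ε / 2) else 0 := by
  by_cases hm2 : 2 ≤ m
  swap
  · rw [if_neg hm2]
    apply le_of_eq
    apply Finset.sum_eq_zero
    intro n _
    rw [alpha, if_neg]
    rintro ⟨h2, -⟩
    exact hm2 h2
  rw [if_pos hm2]
  have hm : 1 ≤ m := by omega
  set Dm := Dfun ε m with hDm
  have hDm0 : 0 ≤ Dm := Dfun_nonneg ε m
  set S := ((Finset.Icc 1 N).filter (fun n => m ≠ n)).filter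
    (fun n => badP m n (Dfun ε m) (Dfun ε n)) with hS
  have hsum1 : ∑ n ∈ (Finset.Icc 1 N).filter (fun n => m ≠ n), alpha ψ ε m n
      = ∑ n ∈ S, alpha ψ ε m n := by
    rw [hS]
    refine (Finset.sum_filter_of_ne (fun n _ hne => ?_)).symm
    by_contra hbad
    exact hne (by rw [alpha, if_neg (fun h => hbad h.2)])
  have hmemS : ∀ n ∈ S, 1 ≤ n ∧ n ≤ N ∧ m ≠ n ∧ badP m n (Dfun ε m) (Dfun ε n) := by
    intro n hn
    rw [hS, Finset.mem_filter, Finset.mem_filter, Finset.mem_Icc] at hn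
    exact ⟨hn.1.1.1, hn.1.1.2, hn.1.2, hn.2⟩
  set F : ℕ × ℕ → ℝ :=
    fun q => ψ m * Dm * (if q.1 = m ∧ q.2 = 1 then 2 else 1) / (q.2:ℝ)^2 with hF
  set p : ℕ → ℕ × ℕ := fun n => (m / Nat.gcd m n, n / Nat.gcd m n) with hp
  have hiff : ∀ n, 1 ≤ n → ((n = 1) ↔ (m / Nat.gcd m n = m ∧ n / Nat.gcd m n = 1)) := by
    intro n hn1
    constructor
    · rintro rfl
      simp [Nat.gcd_one_right]
    · rintro ⟨h1, h2⟩
      have hg1 : 1 ≤ Nat.gcd m n := Nat.gcd_pos_of_pos_left n hm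
      have hgm : Nat.gcd m n ∣ m := Nat.gcd_dvd_left m n
      have hgn : Nat.gcd m n ∣ n := Nat.gcd_dvd_right m n
      have hgm2 : Nat.gcd m n * (m / Nat.gcd m n) = m := Nat.mul_div_cancel' hgm
      rw [h1] at hgm2
      have hgeq : Nat.gcd m n = 1 := by
        by_contra hne1
        have h2' : 2 ≤ Nat.gcd m n := by omega
        have h3' : 2 * m ≤ Nat.gcd m n * m := Nat.mul_le_mul_right m h2'
        omega
      rw [hgeq, Nat.div_one] at h2
      exact h2
  have hval : ∀ n ∈ S, alpha ψ ε m n = F (p n) := by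
    intro n hn
    obtain ⟨hn1, hnN, hne, hbad⟩ := hmemS n hn
    rw [alpha, if_pos ⟨hm2, hbad⟩, hF, hp]
    simp only
    by_cases h1 : n = 1
    · rw [if_pos h1, if_pos ((hiff n hn1).mp h1)]
    · rw [if_neg h1, if_neg (fun hc => h1 ((hiff n hn1).mpr hc))]
  have hinj : ∀ a ∈ S, ∀ b ∈ S, p a = p b → a = b := by
    intro a ha b hb hab
    rw [hp] at hab
    have h1 : m / Nat.gcd m a = m / Nat.gcd m b := congrArg Prod.fst hab
    have h2 : a / Nat.gcd m a = b / Nat.gcd m b := congrArg Prod.snd hab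
    have ha1 := (hmemS a ha).1
    have hb1 := (hmemS b hb).1
    have hga : Nat.gcd m a = m / (m / Nat.gcd m a) :=
      (Nat.div_div_self (Nat.gcd_dvd_left m a) (by omega)).symm
    have hgb : Nat.gcd m b = m / (m / Nat.gcd m b) :=
      (Nat.div_div_self (Nat.gcd_dvd_left m b) (by omega)).symm
    have hgeq : Nat.gcd m a = Nat.gcd m b := by rw [hga, hgb, h1]
    calc a = Nat.gcd m a * (a / Nat.gcd m a) := (Nat.mul_div_cancel' (Nat.gcd_dvd_right m a)).symm
      _ = Nat.gcd m b * (b / Nat.gcd m b) := by rw [h2, hgeq]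
      _ = b := Nat.mul_div_cancel' (Nat.gcd_dvd_right m b)
  have hF0 : ∀ q : ℕ × ℕ, 0 ≤ F q := by
    intro q
    rw [hF]
    refine div_nonneg (mul_nonneg (mul_nonneg (hψ0 m) hDm0) ?_) (sq_nonneg _)
    split_ifs <;> norm_num
  set divF := m.divisors.filter (fun d : ℕ => (d:ℝ) ≤ Dm) with hdivF
  have hsub : S.image p ⊆ divF ×ˢ Finset.Icc 1 N := by
    intro q hq
    obtain ⟨n, hnS, rfl⟩ := Finset.mem_image.mp hq
    obtain ⟨hn1, hnN, hne, hbad⟩ := hmemS n hnS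
    obtain ⟨hμD, hνD⟩ := badP_facts hm hn1 hbad
    have hg1 : 1 ≤ Nat.gcd m n := Nat.gcd_pos_of_pos_left n hm
    refine Finset.mem_product.mpr ⟨Finset.mem_filter.mpr
      ⟨Nat.mem_divisors.mpr ⟨Nat.div_dvd_of_dvd (Nat.gcd_dvd_left m n), by omega⟩, hμD⟩,
      Finset.mem_Icc.mpr ⟨?_, ?_⟩⟩
    · exact Nat.div_pos (Nat.le_of_dvd (by omega) (Nat.gcd_dvd_right m n)) (by omega)
    · exact le_trans (Nat.div_le_self n _) hnN
  have hinner : ∀ d ∈ divF, ∑ ν ∈ Finset.Icc 1 N, F (d, ν) ≤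
      ψ m * Dm * 2 + (if d = m then ψ m * Dm else 0) := by
    intro d _
    have hbnd : ∀ ν ∈ Finset.Icc 1 N, F (d, ν) ≤
        ψ m * Dm * ((1:ℝ)/(ν:ℝ)^2) + (if d = m ∧ ν = 1 then ψ m * Dm else 0) := by
      intro ν hν
      rw [hF]
      simp only
      split_ifs with h
      · rw [h.2]
        norm_num
        nlinarith [mul_nonneg (hψ0 m) hDm0]
      · rw [mul_one, add_zero]
        apply le_of_eq
        field_simp
    calc ∑ ν ∈ Finset.Icc 1 N, F (d, ν)
        ≤ ∑ ν ∈ Finset.Icc 1 N, (ψ m * Dm * ((1:ℝ)/(ν:ℝ)^2)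
          + (if d = m ∧ ν = 1 then ψ m * Dm else 0)) := Finset.sum_le_sum hbnd
      _ = ψ m * Dm * (∑ ν ∈ Finset.Icc 1 N, (1:ℝ)/(ν:ℝ)^2)
          + ∑ ν ∈ Finset.Icc 1 N, (if d = m ∧ ν = 1 then ψ m * Dm else 0) := by
          rw [Finset.sum_add_distrib, Finset.mul_sum]
      _ ≤ ψ m * Dm * 2 + (if d = m then ψ m * Dm else 0) := by
          have hs := sum_inv_sq N
          have hN0 : (0:ℝ) < N := by exact_mod_cast hN
          have h1 : ψ m * Dm * (∑ ν ∈ Finset.Icc 1 N, (1:ℝ)/(ν:ℝ)^2) ≤ ψ m * Dm * 2 := by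
            apply mul_le_mul_of_nonneg_left _ (mul_nonneg (hψ0 m) hDm0)
            have : (0:ℝ) < 1/(N:ℝ) := by positivity
            linarith
          have h2 : ∑ ν ∈ Finset.Icc 1 N, (if d = m ∧ ν = 1 then ψ m * Dm else 0)
              = (if d = m then ψ m * Dm else 0) := by
            by_cases hdm : d = m
            · simp only [hdm, true_and, if_pos]
              rw [Finset.sum_ite_eq' (Finset.Icc 1 N) 1 (fun _ => ψ m * Dm)]
              rw [if_pos (Finset.mem_Icc.mpr ⟨le_refl 1, hN⟩)]
            · simp [hdm]
          rw [h2]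
          exact add_le_add h1 (le_refl _)
  have hcnt : ((divF.card : ℕ) : ℝ) ≤ Dm := cnt_le m Dm hDm0
  calc ∑ n ∈ (Finset.Icc 1 N).filter (fun n => m ≠ n), alpha ψ ε m n
      = ∑ n ∈ S, F (p n) := by rw [hsum1]; exact Finset.sum_congr rfl hval
    _ = ∑ q ∈ S.image p, F q := (Finset.sum_image hinj).symm
    _ ≤ ∑ q ∈ divF ×ˢ Finset.Icc 1 N, F q :=
        Finset.sum_le_sum_of_subset_of_nonneg hsub (fun q _ _ => hF0 q)
    _ = ∑ d ∈ divF, ∑ ν ∈ Finset.Icc 1 N, F (d, ν) := Finset.sum_product _ _ _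
    _ ≤ ∑ d ∈ divF, (ψ m * Dm * 2 + (if d = m then ψ m * Dm else 0)) :=
        Finset.sum_le_sum hinner
    _ = (divF.card : ℝ) * (ψ m * Dm * 2) + (if m ∈ divF then ψ m * Dm else 0) := by
        rw [Finset.sum_add_distrib, Finset.sum_const, nsmul_eq_mul]
        congr 1
        have : ∀ d ∈ divF, (if d = m then ψ m * Dm else 0) = (if d = m then ψ m * Dm else 0) :=
          fun _ _ => rfl
        rw [Finset.sum_ite_eq' divF m (fun _ => ψ m * Dm)]
    _ ≤ 2 * ψ m * (Dm * Dm) := by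
        by_cases hmD : m ∈ divF
        · rw [if_pos hmD]
          have hmDm : (m:ℝ) ≤ Dm := (Finset.mem_filter.mp hmD).2
          have hm3 : 3 ≤ m := by
            by_contra hlt
            have hm2' : m = 2 := by omega
            subst hm2'
            rw [hDm, Dfun, if_neg (by norm_num)] at hmDm
            have hlog2 : Real.log 2 < 1 := by
              have := Real.log_two_lt_d9
              linarith
            have : Real.log 2 ^ (ε/4) < 1 :=
              Real.rpow_lt_one (Real.log_nonneg one_le_two) hlog2 (by linarith)
            norm_num at hmDm
            linarith
          have hτn : divF.card ≤ m - 1 :=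
            le_trans (Finset.card_le_card (Finset.filter_subset _ _)) (tau_le m hm3)
          have hτ : ((divF.card : ℕ) : ℝ) ≤ (m:ℝ) - 1 := by
            have : ((divF.card : ℕ) : ℝ) ≤ ((m - 1 : ℕ) : ℝ) := by exact_mod_cast hτn
            have hcast : ((m - 1 : ℕ) : ℝ) = (m:ℝ) - 1 := by
              have : (1:ℕ) ≤ m := hm
              push_cast [Nat.cast_sub this]
              ring
            linarith [hcast ▸ this]
          have hkey2 : ((divF.card : ℕ) : ℝ) * 2 + 1 ≤ 2 * Dm := by linarith
          nlinarith [mul_nonneg (hψ0 m) hDm0, hkey2]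
        · rw [if_neg hmD, add_zero]
          nlinarith [hcnt, mul_nonneg (hψ0 m) hDm0]
    _ = 2 * ψ m * (Real.log m) ^ (ε / 2) := by
        have hm1R : (1:ℝ) < (m:ℝ) := by exact_mod_cast hm2
        have hlogpos : 0 < Real.log m := Real.log_pos hm1R
        rw [hDm, Dfun, if_neg (by omega : ¬ m ≤ 1)]
        rw [← Real.rpow_add hlogpos]
        norm_num
        left
        ring

end DS13

open DS13

theorem stmt13 (ε : ℝ) (hε : 0 < ε)
    (ψ : ℕ → ℝ) (hψ : ∀ n, 0 ≤ ψ n ∧ ψ n ≤ 1 / 2)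
    (N : ℕ) (hN : 2 ≤ N) :
    ∑ q ∈ (Finset.Icc 1 N ×ˢ Finset.Icc 1 N).filter (fun q : ℕ × ℕ => q.1 ≠ q.2),
        volume (Estar ψ ε q.1 ∩ Estar ψ ε q.2) ≤
      ENNReal.ofReal (8 * (∑ n ∈ Finset.Icc 1 N, ψ n) ^ 2 +
        4 * ∑ n ∈ Finset.Icc 2 N, ψ n * (Real.log n) ^ (ε / 2)) := by
  classical
  have hψ0 : ∀ k, 0 ≤ ψ k := fun k => (hψ k).1
  have hψh : ∀ k, ψ k ≤ 1 / 2 := fun k => (hψ k).2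
  set Pr := (Finset.Icc 1 N ×ˢ Finset.Icc 1 N).filter (fun q : ℕ × ℕ => q.1 ≠ q.2) with hPr
  have hmemPr : ∀ q ∈ Pr, (1 ≤ q.1 ∧ q.1 ≤ N) ∧ (1 ≤ q.2 ∧ q.2 ≤ N) ∧ q.1 ≠ q.2 := by
    intro q hq
    rw [hPr, Finset.mem_filter, Finset.mem_product, Finset.mem_Icc, Finset.mem_Icc] at hq
    exact ⟨hq.1.1, hq.1.2, hq.2⟩
  set G : ℕ × ℕ → ℝ := fun q => 8 * (ψ q.1 * ψ q.2) +
    (if badP q.1 q.2 (Dfun ε q.1) (Dfun ε q.2)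
     then (Nat.gcd q.1 q.2 : ℝ) * min (2 * ψ q.1 / q.1) (2 * ψ q.2 / q.2) else 0) with hG
  have hG0 : ∀ q : ℕ × ℕ, 0 ≤ G q := by
    intro q
    rw [hG]
    have h1 : (0:ℝ) ≤ 8 * (ψ q.1 * ψ q.2) := by
      have := mul_nonneg (hψ0 q.1) (hψ0 q.2); linarith
    have h2 : (0:ℝ) ≤ (if badP q.1 q.2 (Dfun ε q.1) (Dfun ε q.2)
        then (Nat.gcd q.1 q.2 : ℝ) * min (2 * ψ q.1 / q.1) (2 * ψ q.2 / q.2) else 0) := by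
      split_ifs
      · refine mul_nonneg (Nat.cast_nonneg _) (le_min ?_ ?_)
        · exact div_nonneg (by linarith [hψ0 q.1]) (Nat.cast_nonneg _)
        · exact div_nonneg (by linarith [hψ0 q.2]) (Nat.cast_nonneg _)
      · exact le_refl 0
    linarith
  have step1 : ∀ q ∈ Pr, volume (Estar ψ ε q.1 ∩ Estar ψ ε q.2) ≤ ENNReal.ofReal (G q) := by
    intro q hq
    obtain ⟨⟨h11, h12⟩, ⟨h21, h22⟩, hne⟩ := hmemPr q hq
    rw [Estar_eq, Estar_eq]
    exact pair_bound ψ hψ0 hψh q.1 q.2 h11 h21 (Dfun ε q.1) (Dfun ε q.2)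
  have key : ∑ q ∈ Pr, G q ≤ 8 * (∑ n ∈ Finset.Icc 1 N, ψ n) ^ 2 +
      4 * ∑ n ∈ Finset.Icc 2 N, ψ n * (Real.log n) ^ (ε / 2) := by
    rw [hG]
    rw [Finset.sum_add_distrib]
    have part1 : ∑ q ∈ Pr, 8 * (ψ q.1 * ψ q.2) ≤ 8 * (∑ n ∈ Finset.Icc 1 N, ψ n) ^ 2 := by
      calc ∑ q ∈ Pr, 8 * (ψ q.1 * ψ q.2)
          ≤ ∑ q ∈ Finset.Icc 1 N ×ˢ Finset.Icc 1 N, 8 * (ψ q.1 * ψ q.2) := by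
            refine Finset.sum_le_sum_of_subset_of_nonneg (by rw [hPr]; exact Finset.filter_subset _ _)
              (fun q _ _ => ?_)
            have := mul_nonneg (hψ0 q.1) (hψ0 q.2); linarith
        _ = 8 * ∑ x ∈ Finset.Icc 1 N, ∑ y ∈ Finset.Icc 1 N, ψ x * ψ y := by
            rw [Finset.sum_product, Finset.mul_sum]
            exact Finset.sum_congr rfl (fun x _ => by rw [Finset.mul_sum])
        _ = 8 * (∑ n ∈ Finset.Icc 1 N, ψ n) ^ 2 := by rw [sq, Finset.sum_mul_sum]
    have part2 : ∑ q ∈ Pr, (if badP q.1 q.2 (Dfun ε q.1) (Dfun ε q.2)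
        then (Nat.gcd q.1 q.2 : ℝ) * min (2 * ψ q.1 / q.1) (2 * ψ q.2 / q.2) else 0)
        ≤ 4 * ∑ n ∈ Finset.Icc 2 N, ψ n * (Real.log n) ^ (ε / 2) := by
      have step_a : ∀ q ∈ Pr, (if badP q.1 q.2 (Dfun ε q.1) (Dfun ε q.2)
          then (Nat.gcd q.1 q.2 : ℝ) * min (2 * ψ q.1 / q.1) (2 * ψ q.2 / q.2) else 0)
          ≤ alpha ψ ε q.1 q.2 + alpha ψ ε q.2 q.1 := by
        intro q hq
        obtain ⟨⟨h11, h12⟩, ⟨h21, h22⟩, hne⟩ := hmemPr q hq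
        split_ifs with hb
        · exact badterm_le ψ hψ0 ε q.1 q.2 h11 h21 hne hb
        · exact add_nonneg (alpha_nonneg ψ hψ0 ε _ _) (alpha_nonneg ψ hψ0 ε _ _)
      have hswap : ∀ q ∈ Pr, q.swap ∈ Pr := by
        intro q hq
        obtain ⟨⟨h11, h12⟩, ⟨h21, h22⟩, hne⟩ := hmemPr q hq
        rw [hPr, Finset.mem_filter, Finset.mem_product, Finset.mem_Icc, Finset.mem_Icc]
        exact ⟨⟨⟨h21, h22⟩, h11, h12⟩, fun h => hne h.symm⟩
      have hswapsum : ∑ q ∈ Pr, alpha ψ ε q.2 q.1 = ∑ q ∈ Pr, alpha ψ ε q.1 q.2 := by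
        refine Finset.sum_nbij' (fun q => q.swap) (fun q => q.swap) hswap hswap
          (fun q _ => Prod.swap_swap q) (fun q _ => Prod.swap_swap q) (fun q _ => rfl)
      have hper : ∑ q ∈ Pr, alpha ψ ε q.1 q.2 ≤
          ∑ x ∈ Finset.Icc 1 N, (if 2 ≤ x then 2 * ψ x * (Real.log x) ^ (ε / 2) else 0) := by
        have heq : ∑ q ∈ Pr, alpha ψ ε q.1 q.2 =
            ∑ x ∈ Finset.Icc 1 N, ∑ y ∈ (Finset.Icc 1 N).filter (fun n => x ≠ n), alpha ψ ε x y := by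
          rw [hPr, Finset.sum_filter, Finset.sum_product]
          exact Finset.sum_congr rfl (fun x _ => (Finset.sum_filter _ _).symm)
        rw [heq]
        exact Finset.sum_le_sum (fun x _ => per_m ψ hψ0 ε hε N x (by omega))
      calc ∑ q ∈ Pr, (if badP q.1 q.2 (Dfun ε q.1) (Dfun ε q.2)
            then (Nat.gcd q.1 q.2 : ℝ) * min (2 * ψ q.1 / q.1) (2 * ψ q.2 / q.2) else 0)
          ≤ ∑ q ∈ Pr, (alpha ψ ε q.1 q.2 + alpha ψ ε q.2 q.1) := Finset.sum_le_sum step_a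
        _ = 2 * ∑ q ∈ Pr, alpha ψ ε q.1 q.2 := by
            rw [Finset.sum_add_distrib, hswapsum, two_mul]
        _ ≤ 2 * ∑ x ∈ Finset.Icc 1 N, (if 2 ≤ x then 2 * ψ x * (Real.log x) ^ (ε / 2) else 0) := by
            linarith [hper]
        _ = 2 * ∑ x ∈ Finset.Icc 2 N, 2 * ψ x * (Real.log x) ^ (ε / 2) := by
            congr 1
            rw [← Finset.sum_filter]
            congr 1
            ext x
            simp only [Finset.mem_filter, Finset.mem_Icc]
            omega
        _ = 4 * ∑ n ∈ Finset.Icc 2 N, ψ n * (Real.log n) ^ (ε / 2) := by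
            rw [Finset.mul_sum, Finset.mul_sum]
            exact Finset.sum_congr rfl (fun x _ => by ring)
    linarith [part1, part2]
  calc ∑ q ∈ Pr, volume (Estar ψ ε q.1 ∩ Estar ψ ε q.2)
      ≤ ∑ q ∈ Pr, ENNReal.ofReal (G q) := Finset.sum_le_sum step1
    _ = ENNReal.ofReal (∑ q ∈ Pr, G q) :=
        (ENNReal.ofReal_sum_of_nonneg (fun q _ => hG0 q)).symm
    _ ≤ _ := ENNReal.ofReal_le_ofReal key
end

section
/- Let ε > 0 and let ψ : ℕ → ℝ be a function with 0 ≤ ψ(n) ≤ 1/2 for all n such that ∑_{n=2}^∞ ψ(n)/(log n)^ε diverges. Then there are infinitely many positive integers N such that ∑_{n=1}^N ψ(n) ≥ (log N)^{ε/2}. -/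
open Filter

theorem stmt14 (ε : ℝ) (hε : 0 < ε)
    (ψ : ℕ → ℝ) (hψ : ∀ n, 0 ≤ ψ n ∧ ψ n ≤ 1 / 2)
    (hdiv : ¬ Summable (fun n : ℕ => ψ n / (Real.log n) ^ ε)) :
    {N : ℕ | 0 < N ∧
      (Real.log N) ^ (ε / 2) ≤ ∑ n ∈ Finset.Icc 1 N, ψ n}.Infinite := by
  by_contra hfin
  rw [Set.not_infinite] at hfin
  set S : ℕ → ℝ := fun N => ∑ n ∈ Finset.Icc 1 N, ψ n with hSdef
  have hψ0 : ∀ n, 0 ≤ ψ n := fun n => (hψ n).1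
  have hSmono : Monotone S := by
    intro a b hab
    exact Finset.sum_le_sum_of_subset_of_nonneg
      (Finset.Icc_subset_Icc_right hab) (fun i _ _ => hψ0 i)
  have hSstep : ∀ k, S (k + 1) = S k + ψ (k + 1) := by
    intro k
    exact Finset.sum_Icc_succ_top (by omega) ψ
  -- ψ is not summable
  have hnsum : ¬ Summable ψ := by
    intro hs
    apply hdiv
    rw [← summable_nat_add_iff 3]
    apply Summable.of_nonneg_of_le
      (fun n => div_nonneg (hψ0 _) (Real.rpow_nonneg
        (Real.log_nonneg (by exact_mod_cast Nat.one_le_iff_ne_zero.2 (by omega))) ε))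
      ?_ ((summable_nat_add_iff 3).2 hs)
    intro n
    have h1 : (1 : ℝ) ≤ Real.log (↑(n + 3)) := by
      rw [Real.le_log_iff_exp_le (by positivity)]
      calc Real.exp 1 ≤ 2.7182818286 := Real.exp_one_lt_d9.le
        _ ≤ (↑(n + 3) : ℝ) := by push_cast; linarith [Nat.cast_nonneg (α := ℝ) n]
    have h2 : (1 : ℝ) ≤ Real.log (↑(n + 3)) ^ ε := by
      calc (1:ℝ) = (1:ℝ) ^ ε := (Real.one_rpow ε).symm
        _ ≤ _ := Real.rpow_le_rpow zero_le_one h1 hε.le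
    exact div_le_self (hψ0 _) h2
  -- partial sums tend to infinity
  have htend : Tendsto (fun n => ∑ i ∈ Finset.range n, ψ i) atTop atTop :=
    (not_summable_iff_tendsto_nat_atTop_of_nonneg hψ0).1 hnsum
  obtain ⟨N1, hN1⟩ := (htend.eventually_ge_atTop (1 + ψ 0)).exists_forall_of_atTop
  have hS1 : ∀ n, N1 ≤ n → 1 ≤ S n := by
    intro n hn
    have h := hN1 (n + 1) (by omega)
    have heq : ∑ i ∈ Finset.range (n + 1), ψ i = S n + ψ 0 := by
      rw [Finset.sum_range_succ']
      have h2 : ∑ k ∈ Finset.range n, ψ (k + 1) = S n := by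
        rw [hSdef]
        show _ = ∑ i ∈ Finset.Icc 1 n, ψ i
        rw [show Finset.Icc 1 n = Finset.Ico 1 (n+1) from (Finset.Ico_add_one_right_eq_Icc 1 n).symm]
        rw [Finset.sum_Ico_eq_sum_range]
        simp [add_comm]
      rw [h2]
    rw [heq] at h
    linarith
  -- upper bound for the finite set
  obtain ⟨M, hM⟩ := hfin.bddAbove
  have hlt : ∀ n, M < n → S n < Real.log ↑n ^ (ε / 2) := by
    intro n hn
    by_contra h
    push_neg at h
    exact absurd (hM ⟨by omega, h⟩) (by omega)
  set m : ℕ := max M (max N1 3) with hm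
  apply hdiv
  rw [← summable_nat_add_iff (m + 1)]
  apply summable_of_sum_range_le (c := 1 / S m)
  · intro n
    exact div_nonneg (hψ0 _) (Real.rpow_nonneg
      (Real.log_nonneg (by exact_mod_cast Nat.one_le_iff_ne_zero.2 (by omega))) ε)
  · intro K
    have key : ∀ k : ℕ, ψ (k + (m + 1)) / Real.log ↑(k + (m + 1)) ^ ε ≤
        1 / S (m + k) - 1 / S (m + (k + 1)) := by
      intro k
      have hidx : k + (m + 1) = m + k + 1 := by omega
      rw [hidx]
      have ha1 : (1:ℝ) ≤ S (m + k) := hS1 _ (by omega)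
      have hb1 : (1:ℝ) ≤ S (m + k + 1) := hS1 _ (by omega)
      have hab : S (m + k) ≤ S (m + k + 1) := hSmono (by omega)
      have hψeq : ψ (m + k + 1) = S (m + k + 1) - S (m + k) := by
        rw [hSstep (m + k)]; ring
      have hlog : (0:ℝ) < Real.log ↑(m + k + 1) :=
        Real.log_pos (by exact_mod_cast (by omega : 1 < m + k + 1))
      have hbL : S (m + k + 1) < Real.log ↑(m + k + 1) ^ (ε / 2) :=
        hlt _ (by omega)
      have hLL : Real.log ↑(m + k + 1) ^ (ε / 2) * Real.log ↑(m + k + 1) ^ (ε / 2)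
          = Real.log ↑(m + k + 1) ^ ε := by
        rw [← Real.rpow_add hlog, add_halves]
      have habL : S (m + k) * S (m + k + 1) ≤ Real.log ↑(m + k + 1) ^ ε := by
        rw [← hLL]
        apply mul_le_mul (le_of_lt (lt_of_le_of_lt hab hbL)) hbL.le (by linarith) (by positivity)
      have hstep1 : ψ (m + k + 1) / Real.log ↑(m + k + 1) ^ ε ≤
          ψ (m + k + 1) / (S (m + k) * S (m + k + 1)) := by
        apply div_le_div_of_nonneg_left (hψ0 _) (by nlinarith) habL
      have hstep2 : ψ (m + k + 1) / (S (m + k) * S (m + k + 1)) =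
          1 / S (m + k) - 1 / S (m + (k + 1)) := by
        rw [show m + (k + 1) = m + k + 1 by omega, hψeq]
        field_simp
      linarith
    calc ∑ k ∈ Finset.range K, ψ (k + (m + 1)) / Real.log ↑(k + (m + 1)) ^ ε
        ≤ ∑ k ∈ Finset.range K, (1 / S (m + k) - 1 / S (m + (k + 1))) :=
          Finset.sum_le_sum (fun k _ => key k)
      _ = 1 / S (m + 0) - 1 / S (m + K) :=
          Finset.sum_range_sub' (fun k => 1 / S (m + k)) K
      _ ≤ 1 / S m := by
          have h1 : (1:ℝ) ≤ S (m + K) := hS1 _ (by omega)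
          have : 0 ≤ 1 / S (m + K) := by positivity
          simp only [Nat.add_zero]
          linarith
end

section
/- Let n be a squarefree positive integer and D ≥ 1 a real number such that every prime p ≤ D divides n. Then the cardinality of S(n,D) = {a ∈ {1,…,n} : gcd(a,n) ≤ D} equals φ(n) · ∑_{l ≤ D} μ(l)²/φ(l), where the sum is over positive integers l ≤ D. -/
open ArithmeticFunction
open scoped ArithmeticFunction.Moebius

/-- `S n D` is the set of `a ∈ {1, …, n}` with `gcd(a, n) ≤ D`. -/
noncomputable def S (n : ℕ) (D : ℝ) : Finset ℕ :=
  (Finset.Icc 1 n).filter (fun a => (Nat.gcd a n : ℝ) ≤ D)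

theorem stmt16 (n : ℕ) (hn : 0 < n) (hsq : Squarefree n)
    (D : ℝ) (hD : 1 ≤ D) (hPn : ∀ p : ℕ, p.Prime → (p : ℝ) ≤ D → p ∣ n) :
    ((S n D).card : ℝ) =
      (Nat.totient n : ℝ) *
        ∑ l ∈ Finset.Icc 1 ⌊D⌋₊, ((μ l : ℤ) : ℝ) ^ 2 / (Nat.totient l : ℝ) := by
  classical
  set K := ⌊D⌋₊ with hKdef
  have hD0 : (0:ℝ) ≤ D := by linarith
  have hKD : (K : ℝ) ≤ D := Nat.floor_le hD0
  -- Step 1: rewrite S with a natural-number condition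
  have h1 : S n D = (Finset.Icc 1 n).filter (fun a => Nat.gcd a n ≤ K) := by
    apply Finset.filter_congr
    intro a _
    simp [hKdef, Nat.le_floor_iff hD0]
  -- Step 2: bijection to range n
  have h2 : ((Finset.Icc 1 n).filter (fun a => Nat.gcd a n ≤ K)).card
      = ((Finset.range n).filter (fun k => Nat.gcd n k ≤ K)).card := by
    apply Finset.card_bij (fun a _ => a % n)
    · intro a ha
      simp only [Finset.mem_filter, Finset.mem_Icc] at ha
      simp only [Finset.mem_filter, Finset.mem_range]
      refine ⟨Nat.mod_lt _ hn, ?_⟩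
      have : Nat.gcd n (a % n) = Nat.gcd a n := by
        rw [Nat.gcd_comm, ← Nat.gcd_rec]
        exact (Nat.gcd_comm a n).symm
      rw [this]; exact ha.2
    · intro a ha b hb hab
      simp only [Finset.mem_filter, Finset.mem_Icc] at ha hb
      have key : ∀ c : ℕ, 1 ≤ c → c ≤ n → c % n = if c = n then 0 else c := by
        intro c hc1 hc2
        by_cases h : c = n
        · simp [h]
        · rw [if_neg h]
          exact Nat.mod_eq_of_lt (lt_of_le_of_ne hc2 h)
      rw [key a ha.1.1 ha.1.2, key b hb.1.1 hb.1.2] at hab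
      by_cases h : a = n <;> by_cases h' : b = n
      · rw [h, h']
      · rw [if_pos h, if_neg h'] at hab; omega
      · rw [if_neg h, if_pos h'] at hab; omega
      · rwa [if_neg h, if_neg h'] at hab
    · intro k hk
      simp only [Finset.mem_filter, Finset.mem_range] at hk
      by_cases h : k = 0
      · refine ⟨n, ?_, by simp [h]⟩
        simp only [Finset.mem_filter, Finset.mem_Icc]
        refine ⟨⟨hn, le_rfl⟩, ?_⟩
        rw [Nat.gcd_self]
        simpa [h] using hk.2
      · refine ⟨k, ?_, Nat.mod_eq_of_lt hk.1⟩
        simp only [Finset.mem_filter, Finset.mem_Icc]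
        exact ⟨⟨Nat.one_le_iff_ne_zero.2 h, hk.1.le⟩, by rw [Nat.gcd_comm]; exact hk.2⟩
  -- Step 3: fiberwise count
  have h3 : ((Finset.range n).filter (fun k => Nat.gcd n k ≤ K)).card
      = ∑ d ∈ n.divisors.filter (fun d => d ≤ K), Nat.totient (n / d) := by
    rw [Finset.card_eq_sum_card_fiberwise
      (f := fun k => Nat.gcd n k) (t := n.divisors.filter (fun d => d ≤ K))
      (fun x hx => by
        simp only [Finset.mem_coe, Finset.mem_filter, Finset.mem_range] at hx
        simp only [Finset.mem_coe, Finset.mem_filter, Nat.mem_divisors]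
        exact ⟨⟨Nat.gcd_dvd_left _ _, hn.ne'⟩, hx.2⟩)]
    apply Finset.sum_congr rfl
    intro d hd
    simp only [Finset.mem_filter, Nat.mem_divisors] at hd
    rw [Nat.totient_div_of_dvd hd.1.1]
    congr 1
    ext k
    simp only [Finset.mem_filter, Finset.mem_range]
    constructor
    · rintro ⟨⟨h1, _⟩, h2⟩; exact ⟨h1, h2⟩
    · rintro ⟨h1, h2⟩; exact ⟨⟨h1, h2 ▸ hd.2⟩, h2⟩
  -- key divisibility fact
  have hsqT : ∀ l, l ∈ (Finset.Icc 1 K).filter Squarefree ↔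
      l ∈ n.divisors.filter (fun d => d ≤ K) := by
    intro l
    simp only [Finset.mem_filter, Finset.mem_Icc, Nat.mem_divisors]
    constructor
    · rintro ⟨⟨hl1, hlK⟩, hlsq⟩
      refine ⟨⟨?_, hn.ne'⟩, hlK⟩
      have hsub : l.primeFactors ⊆ n.primeFactors := by
        intro p hp
        rw [Nat.mem_primeFactors] at hp ⊢
        refine ⟨hp.1, hPn p hp.1 ?_, hn.ne'⟩
        have : p ≤ l := Nat.le_of_dvd (by omega) hp.2.1
        have : (p : ℝ) ≤ (K : ℝ) := by exact_mod_cast le_trans this hlK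
        linarith
      calc l = ∏ p ∈ l.primeFactors, p := (Nat.prod_primeFactors_of_squarefree hlsq).symm
        _ ∣ ∏ p ∈ n.primeFactors, p := Finset.prod_dvd_prod_of_subset _ _ _ hsub
        _ = n := Nat.prod_primeFactors_of_squarefree hsq
    · rintro ⟨⟨hln, _⟩, hlK⟩
      exact ⟨⟨Nat.one_le_iff_ne_zero.2 (fun h => by simp [h] at hln; omega), hlK⟩,
        hsq.squarefree_of_dvd hln⟩
  -- Step 4: transform the RHS sum
  have h4 : (Nat.totient n : ℝ) *
      ∑ l ∈ Finset.Icc 1 K, ((μ l : ℤ) : ℝ) ^ 2 / (Nat.totient l : ℝ)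
      = ∑ d ∈ n.divisors.filter (fun d => d ≤ K), (Nat.totient (n / d) : ℝ) := by
    rw [Finset.mul_sum]
    rw [← Finset.sum_filter_of_ne (p := Squarefree)
      (f := fun l => (Nat.totient n : ℝ) * (((μ l : ℤ) : ℝ) ^ 2 / (Nat.totient l : ℝ)))
      (by
        intro x _ hx
        by_contra hc
        rw [moebius_eq_zero_of_not_squarefree hc] at hx
        simp at hx)]
    rw [Finset.sum_congr (Finset.ext hsqT) (fun d hd => ?_)]
    rw [← hsqT] at hd
    simp only [Finset.mem_filter, Finset.mem_Icc] at hd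
    obtain ⟨⟨hd1, hdK⟩, hdsq⟩ := hd
    have hdn : d ∣ n := by
      have := (hsqT d).1 (by simp only [Finset.mem_filter, Finset.mem_Icc]; exact ⟨⟨hd1, hdK⟩, hdsq⟩)
      simp only [Finset.mem_filter, Nat.mem_divisors] at this
      exact this.1.1
    have hμ : ((μ d : ℤ) : ℝ) ^ 2 = 1 := by
      have := moebius_sq_eq_one_of_squarefree hdsq
      exact_mod_cast congrArg (fun z : ℤ => (z : ℝ)) this
    have hcop : Nat.Coprime d (n / d) := by
      have hg : Nat.gcd d (n / d) * Nat.gcd d (n / d) ∣ n := by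
        calc Nat.gcd d (n / d) * Nat.gcd d (n / d) ∣ d * (n / d) :=
          mul_dvd_mul (Nat.gcd_dvd_left _ _) (Nat.gcd_dvd_right _ _)
        _ = n := Nat.mul_div_cancel' hdn
      exact Nat.isUnit_iff.1 (hsq _ hg)
    have htot : Nat.totient n = Nat.totient d * Nat.totient (n / d) := by
      rw [← Nat.totient_mul hcop, Nat.mul_div_cancel' hdn]
    have hd0 : (0:ℝ) < Nat.totient d := by
      exact_mod_cast Nat.totient_pos.2 (by omega)
    rw [hμ, htot]
    push_cast
    field_simp
  rw [h1, h2, h3, h4]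
  push_cast
  ring
end
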